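/- arXiv:1001.3014 — 5 statements merged into one kernel-verified Lean document; each statement's English description precedes it below -/
import Mathlib

section
/- Let f_{a,b,c} be a piecewise linear Lorenz map with ac + b(1-c) = 1 and irrational rotation number ρ. Then the Lyapunov exponent of f_{a,b,c} is zero at every point x not in ∪_{n≥0} f^{-n}(c): lim_n (1/n) log (f^n)'(x) = 0. -/
/-- The piecewise linear Lorenz map `f_{a,b,c}`. -/
noncomputable def lorenz (a b c : ℝ) : ℝ → ℝ := fun x =>
  if x < c then a * x + 1 - a * c else b * (x - c)

open Classical in
/-- `mcount f c n x` is the number of `0 ≤ i < n` with `f^i(x) ∈ (c,1]`. -/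
noncomputable def mcount (f : ℝ → ℝ) (c : ℝ) (n : ℕ) (x : ℝ) : ℕ :=
  ((Finset.range n).filter fun i => f^[i] x ∈ Set.Ioc c 1).card

namespace LorenzAux

open Set Filter Real

/-- The standing hypotheses. -/
def good (a b c : ℝ) : Prop :=
  0 < a ∧ 0 < b ∧ 0 < c ∧ c < 1 ∧ a * c + b * (1 - c) = 1

theorem good_bc {a b c : ℝ} (h : good a b c) : b * (1 - c) = 1 - a * c := by
  obtain ⟨_, _, _, _, h5⟩ := h; linarith

theorem good_pos {a b c : ℝ} (h : good a b c) : 0 < 1 - a * c := by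
  obtain ⟨h1, h2, h3, h4, h5⟩ := h; nlinarith

theorem good_lt1 {a b c : ℝ} (h : good a b c) : 1 - a * c < 1 := by
  obtain ⟨h1, h2, h3, h4, h5⟩ := h; nlinarith

/-- Inverse parameters are good. -/
theorem good_inv {a b c : ℝ} (h : good a b c) : good (1/b) (1/a) (1 - a*c) := by
  obtain ⟨h1, h2, h3, h4, h5⟩ := h
  refine ⟨by positivity, by positivity, ?_, ?_, ?_⟩
  · nlinarith
  · nlinarith
  · field_simp
    ring_nf
    nlinarith

/-- The fundamental lift function. -/
noncomputable def ell (a b c : ℝ) (y : ℝ) : ℝ :=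
  if y < c then a * y + 1 - a * c else b * (y - c) + 1

theorem ell_mono {a b c : ℝ} (h : good a b c) : Monotone (ell a b c) := by
  obtain ⟨h1, h2, h3, h4, h5⟩ := h
  intro x y hxy
  unfold ell
  split_ifs with hx hy hy
  · nlinarith
  · nlinarith [h1.le, mul_le_mul_of_nonneg_left hxy h1.le]
  · exfalso; linarith
  · nlinarith

theorem ell_lb {a b c : ℝ} (h : good a b c) {y : ℝ} (hy : 0 ≤ y) :
    1 - a * c ≤ ell a b c y := by
  obtain ⟨h1, h2, h3, h4, h5⟩ := h
  unfold ell; split_ifs with hx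
  · nlinarith
  · nlinarith [good_pos ⟨h1, h2, h3, h4, h5⟩]

theorem ell_ub {a b c : ℝ} (h : good a b c) {y : ℝ} (hy : y < 1) :
    ell a b c y < 2 - a * c := by
  obtain ⟨h1, h2, h3, h4, h5⟩ := h
  unfold ell; split_ifs with hx
  · nlinarith [good_pos ⟨h1, h2, h3, h4, h5⟩]
  · nlinarith

open Classical in
/-- The degree one lift of the Lorenz circle map. -/
noncomputable def LG (a b c : ℝ) : CircleDeg1Lift :=
  if h : good a b c then
    { toFun := fun x => ell a b c (Int.fract x) + (⌊x⌋ : ℝ)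
      monotone' := by
        intro x y hxy
        rcases eq_or_lt_of_le (Int.floor_mono hxy) with hf | hf
        · simp only []
          rw [hf]
          have : Int.fract x ≤ Int.fract y := by
            unfold Int.fract; rw [hf]; linarith
          have := ell_mono h this
          linarith
        · have b1 : ell a b c (Int.fract x) < 2 - a * c :=
            ell_ub h (Int.fract_lt_one x)
          have b2 : 1 - a * c ≤ ell a b c (Int.fract y) :=
            ell_lb h (Int.fract_nonneg y)
          have : (⌊x⌋ : ℝ) + 1 ≤ (⌊y⌋ : ℝ) := by exact_mod_cast hf
          simp only []
          linarith
      map_add_one' := by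
        intro x
        simp only [Int.fract_add_one, Int.floor_add_one]
        push_cast
        ring }
  else 1

theorem LG_apply {a b c : ℝ} (h : good a b c) (x : ℝ) :
    LG a b c x = ell a b c (Int.fract x) + (⌊x⌋ : ℝ) := by
  classical
  rw [LG, dif_pos h]; rfl

theorem lorenz_mem {a b c : ℝ} (h : good a b c) {y : ℝ} (hy : y ∈ Icc (0:ℝ) 1) :
    lorenz a b c y ∈ Ico (0:ℝ) 1 := by
  obtain ⟨h1, h2, h3, h4, h5⟩ := h
  obtain ⟨hy0, hy1⟩ := hy
  unfold lorenz
  split_ifs with hx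
  · constructor
    · nlinarith
    · nlinarith
  · constructor
    · nlinarith
    · nlinarith [good_pos ⟨h1, h2, h3, h4, h5⟩]

theorem iter_mem {a b c : ℝ} (h : good a b c) {x : ℝ} (hx : x ∈ Icc (0:ℝ) 1) :
    ∀ n : ℕ, (lorenz a b c)^[n] x ∈ Icc (0:ℝ) 1 := by
  intro n
  induction n with
  | zero => simpa using hx
  | succ n ih =>
      rw [Function.iterate_succ_apply']
      exact Ico_subset_Icc_self (lorenz_mem h ih)

theorem lorenz_injOn {a b c : ℝ} (h : good a b c) :
    Set.InjOn (lorenz a b c) (Ico (0:ℝ) 1) := by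
  obtain ⟨h1, h2, h3, h4, h5⟩ := h
  intro x hx y hy hxy
  unfold lorenz at hxy
  split_ifs at hxy with p q q
  · nlinarith
  · exfalso
    obtain ⟨hx0, hx1⟩ := hx; obtain ⟨hy0, hy1⟩ := hy
    nlinarith
  · exfalso
    obtain ⟨hx0, hx1⟩ := hx; obtain ⟨hy0, hy1⟩ := hy
    nlinarith
  · nlinarith

theorem iter_mem_Ico {a b c : ℝ} (h : good a b c) {x : ℝ} (hx : x ∈ Ico (0:ℝ) 1) :
    ∀ n : ℕ, (lorenz a b c)^[n] x ∈ Ico (0:ℝ) 1 := by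
  intro n
  induction n with
  | zero => simpa using hx
  | succ n ih =>
      rw [Function.iterate_succ_apply']
      exact lorenz_mem h (Ico_subset_Icc_self ih)

theorem iterate_injOn {a b c : ℝ} (h : good a b c) (n : ℕ) :
    Set.InjOn ((lorenz a b c)^[n]) (Ico (0:ℝ) 1) := by
  induction n with
  | zero => simp [Set.injOn_id]
  | succ n ih =>
      intro x hx y hy hxy
      rw [Function.iterate_succ_apply', Function.iterate_succ_apply'] at hxy
      exact ih hx hy (lorenz_injOn h (iter_mem_Ico h hx n) (iter_mem_Ico h hy n) hxy)

theorem mcount_succ (f : ℝ → ℝ) (c : ℝ) (n : ℕ) (x : ℝ) :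
    mcount f c (n+1) x =
      mcount f c n x + (if f^[n] x ∈ Set.Ioc c 1 then 1 else 0) := by
  classical
  unfold mcount
  rw [Finset.range_add_one, Finset.filter_insert]
  split_ifs with hmem
  · rw [Finset.card_insert_of_notMem (by simp)]
  · simp

theorem mcount_le (f : ℝ → ℝ) (c : ℝ) (n : ℕ) (x : ℝ) :
    mcount f c n x ≤ n := by
  classical
  unfold mcount
  exact le_trans (Finset.card_filter_le _ _) (by simp)

theorem LG_eq_lorenz {a b c : ℝ} (h : good a b c) {y : ℝ} (hy : y ∈ Icc (0:ℝ) 1)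
    (hyc : y ≠ c) :
    LG a b c y = lorenz a b c y + (if y ∈ Set.Ioc c 1 then 1 else 0) := by
  obtain ⟨h1, h2, h3, h4, h5⟩ := h
  obtain ⟨hy0, hy1⟩ := hy
  rw [LG_apply ⟨h1, h2, h3, h4, h5⟩]
  rcases lt_or_eq_of_le hy1 with hy1' | rfl
  · rw [Int.fract_eq_self.mpr ⟨hy0, hy1'⟩, Int.floor_eq_zero_iff.mpr ⟨hy0, hy1'⟩]
    unfold ell lorenz
    rcases lt_trichotomy y c with hyc' | hyc' | hyc'
    · rw [if_pos hyc', if_pos hyc', if_neg (by simp [Set.Ioc]; intro hh; linarith)]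
      simp
    · exact absurd hyc' hyc
    · rw [if_neg (not_lt.mpr hyc'.le), if_neg (not_lt.mpr hyc'.le),
        if_pos ⟨hyc', hy1'.le⟩]
      push_cast; ring
  · have : Int.fract (1:ℝ) = 0 := by norm_num
    rw [this]
    have : (⌊(1:ℝ)⌋ : ℝ) = 1 := by norm_num
    rw [this]
    unfold ell lorenz
    rw [if_pos h3, if_neg (not_lt.mpr h4.le), if_pos ⟨h4, le_refl 1⟩]
    push_cast
    linarith [good_bc ⟨h1, h2, h3, h4, h5⟩]

theorem iter_eq {a b c : ℝ} (h : good a b c) {x : ℝ} (hx : x ∈ Icc (0:ℝ) 1)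
    (n : ℕ) (hav : ∀ i < n, (lorenz a b c)^[i] x ≠ c) :
    (⇑(LG a b c))^[n] x = (lorenz a b c)^[n] x + (mcount (lorenz a b c) c n x : ℝ) := by
  induction n with
  | zero => simp [mcount]
  | succ n ih =>
      have ih' := ih (fun i hi => hav i (Nat.lt_succ_of_lt hi))
      rw [Function.iterate_succ_apply', ih']
      have hmem : (lorenz a b c)^[n] x ∈ Icc (0:ℝ) 1 := iter_mem h hx n
      have hne : (lorenz a b c)^[n] x ≠ c := hav n (Nat.lt_succ_self n)
      have hint : (LG a b c) ((lorenz a b c)^[n] x + (mcount (lorenz a b c) c n x : ℝ))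
          = (LG a b c) ((lorenz a b c)^[n] x) + (mcount (lorenz a b c) c n x : ℝ) := by
        exact_mod_cast (LG a b c).map_add_int _ (mcount (lorenz a b c) c n x)
      rw [hint, LG_eq_lorenz h hmem hne, mcount_succ, Function.iterate_succ_apply']
      push_cast
      split_ifs <;> ring

theorem iter_close {a b c : ℝ} (n : ℕ) (x : ℝ) :
    |(⇑(LG a b c))^[n] x - x - (n : ℝ) * (LG a b c).translationNumber| ≤ 2 := by
  set f := LG a b c
  set τ := f.translationNumber
  have hco : (⇑(f ^ n)) x = (⇑f)^[n] x := by rw [CircleDeg1Lift.coe_pow]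
  have hτ : (f ^ n).translationNumber = (n : ℝ) * τ :=
    CircleDeg1Lift.translationNumber_pow f n
  have hub : (⇑(f ^ n)) x < x + (n : ℝ) * τ + 1 := by
    have := (f ^ n).map_lt_add_translationNumber_add_one x
    rwa [hτ] at this
  have hlb : x + ((⌊(n : ℝ) * τ⌋ : ℝ) - 1) < (⇑(f ^ n)) x := by
    have hlt : ((⌊(n : ℝ) * τ⌋ - 1 : ℤ) : ℝ) < (f ^ n).translationNumber := by
      rw [hτ]; push_cast
      nlinarith [Int.floor_le ((n : ℝ) * τ)]
    have := (f ^ n).lt_map_of_int_lt_translationNumber hlt x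
    push_cast at this
    linarith
  rw [hco] at hub hlb
  have h1 : (⌊(n : ℝ) * τ⌋ : ℝ) > (n : ℝ) * τ - 1 := Int.sub_one_lt_floor _
  rw [abs_le]
  constructor <;> nlinarith

theorem mdist {a b c : ℝ} (h : good a b c) {x : ℝ} (hx : x ∈ Icc (0:ℝ) 1)
    (n : ℕ) (hav : ∀ i < n, (lorenz a b c)^[i] x ≠ c) :
    |(mcount (lorenz a b c) c n x : ℝ) - (n : ℝ) * (LG a b c).translationNumber| ≤ 3 := by
  have h1 := iter_eq h hx n hav
  have h2 := iter_close (a := a) (b := b) (c := c) n x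
  have h3 : (lorenz a b c)^[n] x ∈ Icc (0:ℝ) 1 := iter_mem h hx n
  have h4 : |x - (lorenz a b c)^[n] x| ≤ 1 := by
    rw [abs_le]
    obtain ⟨u1, u2⟩ := hx; obtain ⟨v1, v2⟩ := h3
    constructor <;> linarith
  rw [h1] at h2
  rw [abs_le] at *
  constructor <;> [linarith [h2.1, h4.1]; linarith [h2.2, h4.2]]

theorem lorenz_of_lt {a b c x : ℝ} (hx : x < c) : lorenz a b c x = a * x + 1 - a * c := by
  unfold lorenz; rw [if_pos hx]

theorem lorenz_of_ge {a b c x : ℝ} (hx : ¬ x < c) : lorenz a b c x = b * (x - c) := by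
  unfold lorenz; rw [if_neg hx]

theorem affine {a b c : ℝ} (h : good a b c) {u v : ℝ} (hu0 : 0 ≤ u) (hv1 : v ≤ 1)
    (huv : u ≤ v) (n : ℕ)
    (hav : ∀ t ∈ Icc u v, ∀ i < n, (lorenz a b c)^[i] t ≠ c) :
    ∀ t ∈ Icc u v, (lorenz a b c)^[n] t =
      (lorenz a b c)^[n] u +
        (a ^ (n - mcount (lorenz a b c) c n u) * b ^ (mcount (lorenz a b c) c n u))
          * (t - u) := by
  obtain ⟨h1, h2, h3, h4, h5⟩ := h
  induction n with
  | zero => intro t ht; simp [mcount]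
  | succ n ih =>
      have ih' := ih (fun t ht i hi => hav t ht i (Nat.lt_succ_of_lt hi))
      set m := mcount (lorenz a b c) c n u with hm
      set r : ℝ := a ^ (n - m) * b ^ m with hr
      have hrpos : 0 < r := by positivity
      have hune : (lorenz a b c)^[n] u ≠ c :=
        hav u ⟨le_refl u, huv⟩ n (Nat.lt_succ_self n)
      have humem : (lorenz a b c)^[n] u ∈ Icc (0:ℝ) 1 :=
        iter_mem ⟨h1, h2, h3, h4, h5⟩ ⟨hu0, le_trans huv hv1⟩ n
      have hmn : m ≤ n := mcount_le _ _ _ _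
      rcases lt_or_gt_of_ne hune with hlt | hgt
      · -- left branch for all t
        have hside : ∀ t ∈ Icc u v, (lorenz a b c)^[n] t < c := by
          intro t ht
          by_contra hcon
          push_neg at hcon
          have htne : (lorenz a b c)^[n] t ≠ c := hav t ht n (Nat.lt_succ_self n)
          have htgt : c < (lorenz a b c)^[n] t := lt_of_le_of_ne hcon (Ne.symm htne)
          set s : ℝ := u + (c - (lorenz a b c)^[n] u) / r with hs
          have hsu : u ≤ s := by
            rw [hs]
            have : 0 ≤ (c - (lorenz a b c)^[n] u) / r :=
              div_nonneg (by linarith) hrpos.le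
            linarith
          have hst : s ≤ t := by
            have h6 := ih' t ht
            have hdd : (c - (lorenz a b c)^[n] u) / r ≤ t - u := by
              rw [div_le_iff₀ hrpos]
              nlinarith
            rw [hs]; linarith
          have hsmem : s ∈ Icc u v := ⟨hsu, le_trans hst ht.2⟩
          have h7 := ih' s hsmem
          have h8 : r * (s - u) = c - (lorenz a b c)^[n] u := by
            rw [hs]
            field_simp
            ring
          have : (lorenz a b c)^[n] s = c := by rw [h7]; linarith
          exact hav s hsmem n (Nat.lt_succ_self n) this
        intro t ht
        have ht' := ih' t ht
        have hnt : (lorenz a b c)^[n+1] t = a * ((lorenz a b c)^[n] t) + 1 - a * c := by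
          rw [Function.iterate_succ_apply', lorenz_of_lt (hside t ht)]
        have hnu : (lorenz a b c)^[n+1] u = a * ((lorenz a b c)^[n] u) + 1 - a * c := by
          rw [Function.iterate_succ_apply', lorenz_of_lt hlt]
        have hmsucc : mcount (lorenz a b c) c (n+1) u = m := by
          have hno : (lorenz a b c)^[n] u ∉ Set.Ioc c 1 :=
            fun hmem => absurd hmem.1 (not_lt.mpr hlt.le)
          rw [mcount_succ, if_neg hno, add_zero]
        rw [hnt, hnu, ht', hmsucc]
        have hpow : a ^ (n + 1 - m) = a * a ^ (n - m) := by
          rw [show n + 1 - m = (n - m) + 1 by omega, pow_succ]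
          ring
        rw [hpow, hr]
        ring
      · -- right branch for all t
        have hside : ∀ t ∈ Icc u v, c < (lorenz a b c)^[n] t := by
          intro t ht
          have h6 := ih' t ht
          have : (lorenz a b c)^[n] u ≤ (lorenz a b c)^[n] t := by
            rw [h6]
            nlinarith [ht.1]
          linarith
        intro t ht
        have ht' := ih' t ht
        have hnt : (lorenz a b c)^[n+1] t = b * ((lorenz a b c)^[n] t - c) := by
          rw [Function.iterate_succ_apply', lorenz_of_ge (not_lt.mpr (hside t ht).le)]
        have hnu : (lorenz a b c)^[n+1] u = b * ((lorenz a b c)^[n] u - c) := by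
          rw [Function.iterate_succ_apply', lorenz_of_ge (not_lt.mpr hgt.le)]
        have hmsucc : mcount (lorenz a b c) c (n+1) u = m + 1 := by
          rw [mcount_succ, if_pos ⟨hgt, humem.2⟩]
        rw [hnt, hnu, ht', hmsucc]
        have hpow1 : n + 1 - (m + 1) = n - m := by omega
        rw [hpow1, pow_succ, hr]
        ring

theorem gap {a b c : ℝ} (h : good a b c) (n : ℕ) :
    ∃ u : ℝ, 0 ≤ u ∧ u + 1/(2*(n+1)) < 1 ∧
      ∀ t ∈ Icc u (u + 1/(2*(n+1))), ∀ i < n, (lorenz a b c)^[i] t ≠ c := by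
  classical
  set f := lorenz a b c with hf
  set S : Set ℝ := {x | x ∈ Ico (0:ℝ) 1 ∧ ∃ i, i < n ∧ f^[i] x = c} with hS
  set φ : ℝ → ℕ := fun x => sInf {i | f^[i] x = c} with hφdef
  have hφ : ∀ x ∈ S, φ x < n ∧ f^[φ x] x = c := by
    intro x hx
    obtain ⟨hx1, i, hi, hic⟩ := hx
    have hne : {i | f^[i] x = c}.Nonempty := ⟨i, hic⟩
    exact ⟨lt_of_le_of_lt (Nat.sInf_le hic) hi, Nat.sInf_mem hne⟩
  have hinj : Set.InjOn φ S := by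
    intro x hx y hy hxy
    obtain ⟨hxn, hxc⟩ := hφ x hx
    obtain ⟨hyn, hyc⟩ := hφ y hy
    refine iterate_injOn h (φ x) hx.1 hy.1 ?_
    rw [hxc, hxy, hyc]
  have hSfin : S.Finite := by
    refine Set.Finite.of_finite_image ?_ hinj
    refine Set.Finite.subset (Set.finite_Iio n) ?_
    rintro j ⟨x, hx, rfl⟩
    exact (hφ x hx).1
  set T := hSfin.toFinset with hT
  have hTcard : T.card ≤ n := by
    have := Finset.card_le_card_of_injOn (s := T)
      (t := Finset.range n) φ ?_ ?_
    · simpa using this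
    · intro x hx
      rw [hT, Finset.mem_coe, Set.Finite.mem_toFinset] at hx
      exact Finset.mem_range.mpr (hφ x hx).1
    · intro x hx y hy hxy
      have hx' : x ∈ S := by
        have h2 : x ∈ T := Finset.mem_coe.mp hx
        rw [hT] at h2; rwa [Set.Finite.mem_toFinset] at h2
      have hy' : y ∈ S := by
        have h2 : y ∈ T := Finset.mem_coe.mp hy
        rw [hT] at h2; rwa [Set.Finite.mem_toFinset] at h2
      exact hinj hx' hy' hxy
  set ψ : ℝ → ℕ := fun x => (⌊x * ((n:ℝ)+1)⌋).toNat with hψ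
  set J := T.image ψ with hJ
  have hJcard : J.card ≤ n := le_trans (Finset.card_image_le) hTcard
  have hJsub : J ⊆ Finset.range (n+1) := by
    intro j hj
    rw [hJ, Finset.mem_image] at hj
    obtain ⟨x, hxT, rfl⟩ := hj
    have hx' : x ∈ S := by rwa [hT, Set.Finite.mem_toFinset] at hxT
    obtain ⟨⟨hx0, hx1⟩, -⟩ := hx'
    have h1 : x * ((n:ℝ)+1) < (n:ℝ)+1 := by
      have : (0:ℝ) < (n:ℝ)+1 := by positivity
      nlinarith
    have h2 : ⌊x * ((n:ℝ)+1)⌋ < (n:ℤ)+1 := by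
      rw [Int.floor_lt]; push_cast; linarith
    rw [Finset.mem_range]
    show (⌊x * ((n:ℝ)+1)⌋).toNat < n+1
    omega
  have hne : J ≠ Finset.range (n+1) := by
    intro he
    rw [he, Finset.card_range] at hJcard
    omega
  obtain ⟨j, hjr, hjJ⟩ :=
    (Finset.ssubset_iff_of_subset hJsub).mp (lt_of_le_of_ne hJsub hne)
  have hjn : j ≤ n := by
    rw [Finset.mem_range] at hjr; omega
  have hpos : (0:ℝ) < (n:ℝ)+1 := by positivity
  refine ⟨(j:ℝ)/((n:ℝ)+1), by positivity, ?_, ?_⟩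
  · have : (j:ℝ) ≤ n := by exact_mod_cast hjn
    rw [div_add_div _ _ (ne_of_gt hpos) (by positivity : (2*((n:ℝ)+1)) ≠ 0)]
    rw [div_lt_one (by positivity)]
    ring_nf
    nlinarith
  · intro t ht i hi hic
    have ht1 : (j:ℝ)/((n:ℝ)+1) ≤ t := ht.1
    have ht2 : t ≤ (j:ℝ)/((n:ℝ)+1) + 1/(2*((n:ℝ)+1)) := by
      have := ht.2; push_cast at this ⊢; linarith
    have htS : t ∈ S := by
      refine ⟨⟨le_trans (by positivity) ht1, ?_⟩, i, hi, hic⟩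
      have hjn' : (j:ℝ) ≤ n := by exact_mod_cast hjn
      have e1 : (j:ℝ)/((n:ℝ)+1) ≤ (n:ℝ)/((n:ℝ)+1) := by gcongr
      have e2 : (n:ℝ)/((n:ℝ)+1) = 1 - 1/((n:ℝ)+1) := by field_simp; ring
      have e3 : 1/(2*((n:ℝ)+1)) = 1/((n:ℝ)+1)/2 := by
        rw [div_div]; ring_nf
      have e4 : 0 < 1/((n:ℝ)+1) := by positivity
      linarith
    have hψt : ψ t = j := by
      have hfl : ⌊t * ((n:ℝ)+1)⌋ = (j:ℤ) := by
        rw [Int.floor_eq_iff]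
        constructor
        · push_cast
          calc (j:ℝ) = (j:ℝ)/((n:ℝ)+1) * ((n:ℝ)+1) := by field_simp
            _ ≤ t * ((n:ℝ)+1) := by
                apply mul_le_mul_of_nonneg_right ht1 hpos.le
        · push_cast
          have : t * ((n:ℝ)+1) ≤ (j:ℝ) + 1/2 := by
            have := mul_le_mul_of_nonneg_right ht2 hpos.le
            calc t * ((n:ℝ)+1) ≤ ((j:ℝ)/((n:ℝ)+1) + 1/(2*((n:ℝ)+1))) * ((n:ℝ)+1) := this
              _ = (j:ℝ) + 1/2 := by field_simp
          linarith
      rw [hψ]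
      simp [hfl]
    have : ψ t ∈ J := by
      rw [hJ, Finset.mem_image]
      exact ⟨t, by rwa [hT, Set.Finite.mem_toFinset], rfl⟩
    rw [hψt] at this
    exact hjJ this

theorem half {a b c : ℝ} (h : good a b c) (n : ℕ) :
    (n : ℝ) * ((1 - (LG a b c).translationNumber) * Real.log a
        + (LG a b c).translationNumber * Real.log b)
      ≤ Real.log (2*(n+1)) + 3 * |Real.log a - Real.log b| := by
  obtain ⟨u, hu0, hu1, hav⟩ := gap h n
  obtain ⟨h1, h2, h3, h4, h5⟩ := h
  set τ := (LG a b c).translationNumber with hτ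
  set L : ℝ := 1/(2*((n:ℝ)+1)) with hL
  set v : ℝ := u + L with hv
  have hLpos : 0 < L := by rw [hL]; positivity
  have huv : u ≤ v := by rw [hv]; linarith
  have hv1 : v ≤ 1 := le_of_lt hu1
  have haff := affine ⟨h1, h2, h3, h4, h5⟩ hu0 hv1 huv n hav v ⟨huv, le_refl v⟩
  set m := mcount (lorenz a b c) c n u with hm
  have hmn : m ≤ n := mcount_le _ _ _ _
  set r : ℝ := a ^ (n - m) * b ^ m with hr
  have hrpos : 0 < r := by positivity
  have humem : u ∈ Icc (0:ℝ) 1 := ⟨hu0, le_trans huv hv1⟩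
  have hvmem : v ∈ Icc (0:ℝ) 1 := ⟨le_trans hu0 huv, hv1⟩
  have hub : (lorenz a b c)^[n] v ≤ 1 := (iter_mem ⟨h1, h2, h3, h4, h5⟩ hvmem n).2
  have hlb : 0 ≤ (lorenz a b c)^[n] u := (iter_mem ⟨h1, h2, h3, h4, h5⟩ humem n).1
  have hrL : r * L ≤ 1 := by
    have : (lorenz a b c)^[n] v = (lorenz a b c)^[n] u + r * (v - u) := haff
    rw [hv] at this
    have : r * L = (lorenz a b c)^[n] v - (lorenz a b c)^[n] u := by
      rw [this]; ring
    linarith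
  have hrle : r ≤ 2*((n:ℝ)+1) := by
    have hpos2 : (0:ℝ) < 2*((n:ℝ)+1) := by positivity
    have : r * L * (2*((n:ℝ)+1)) ≤ 1 * (2*((n:ℝ)+1)) :=
      mul_le_mul_of_nonneg_right hrL hpos2.le
    have hcalc : r * L * (2*((n:ℝ)+1)) = r := by
      rw [hL]; field_simp
    linarith [hcalc ▸ this]
  have hlog : Real.log r ≤ Real.log (2*((n:ℝ)+1)) := by
    apply Real.log_le_log hrpos hrle
  have hlogr : Real.log r = ((n:ℝ) - m) * Real.log a + m * Real.log b := by
    rw [hr, Real.log_mul (by positivity) (by positivity), Real.log_pow, Real.log_pow,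
      Nat.cast_sub hmn]
  have hav' : ∀ i < n, (lorenz a b c)^[i] u ≠ c :=
    fun i hi => hav u ⟨le_refl u, huv⟩ i hi
  have hmd : |(m:ℝ) - (n:ℝ) * τ| ≤ 3 := mdist ⟨h1, h2, h3, h4, h5⟩ humem n hav'
  have habs : |(n:ℝ)*τ - m| ≤ 3 := by rwa [abs_sub_comm] at hmd
  have hkey : -(((n:ℝ)*τ - m)*(Real.log a - Real.log b))
      ≤ 3 * |Real.log a - Real.log b| := by
    calc -(((n:ℝ)*τ - m)*(Real.log a - Real.log b))
        ≤ |((n:ℝ)*τ - m)*(Real.log a - Real.log b)| := neg_le_abs _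
      _ = |(n:ℝ)*τ - m| * |Real.log a - Real.log b| := abs_mul _ _
      _ ≤ 3 * |Real.log a - Real.log b| :=
          mul_le_mul_of_nonneg_right habs (abs_nonneg _)
  have hid : (n:ℝ) * ((1 - τ) * Real.log a + τ * Real.log b)
      = (((n:ℝ) - m) * Real.log a + m * Real.log b)
        - ((n:ℝ)*τ - m) * (Real.log a - Real.log b) := by ring
  have hgoal : Real.log (2*((n:ℝ)+1)) = Real.log (2*(n+1)) := by norm_num
  rw [hid, ← hlogr]
  linarith [hgoal ▸ hlog]

theorem comp_eq {a b c : ℝ} (h : good a b c) (x : ℝ) :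
    LG (1/b) (1/a) (1 - a*c) (LG a b c x) = x + 1 := by
  obtain ⟨h1, h2, h3, h4, h5⟩ := h
  have h' : good (1/b) (1/a) (1 - a*c) := good_inv ⟨h1, h2, h3, h4, h5⟩
  have hbc : b * (1 - c) = 1 - a * c := good_bc ⟨h1, h2, h3, h4, h5⟩
  have key : ∀ y, 0 ≤ y → y < 1 →
      LG (1/b) (1/a) (1 - a*c) (ell a b c y) = y + 1 := by
    intro y hy0 hy1
    unfold ell
    split_ifs with hyc
    · have hz0 : (0:ℝ) ≤ a*y + 1 - a*c := by nlinarith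
      have hz1 : a*y + 1 - a*c < 1 := by nlinarith
      rw [LG_apply h', Int.fract_eq_self.mpr ⟨hz0, hz1⟩,
        Int.floor_eq_zero_iff.mpr ⟨hz0, hz1⟩]
      unfold ell
      rw [if_neg (by push_neg; nlinarith)]
      push_cast
      field_simp
      ring
    · push_neg at hyc
      have hw0 : (0:ℝ) ≤ b*(y - c) := by nlinarith
      have hw1 : b*(y - c) < 1 - a*c := by nlinarith
      have hw2 : b*(y - c) < 1 := by nlinarith [good_pos ⟨h1, h2, h3, h4, h5⟩]
      have hsplit : b * (y - c) + 1 = b*(y-c) + ((1:ℤ):ℝ) := by push_cast; ring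
      rw [hsplit, CircleDeg1Lift.map_add_int, LG_apply h',
        Int.fract_eq_self.mpr ⟨hw0, hw2⟩,
        Int.floor_eq_zero_iff.mpr ⟨hw0, hw2⟩]
      unfold ell
      rw [if_pos hw1]
      have e : (1/b) * (1 - a*c) = 1 - c := by
        rw [← hbc]; field_simp
      push_cast
      have : 1/b * (b*(y-c)) = y - c := by field_simp
      linarith
  rw [LG_apply ⟨h1, h2, h3, h4, h5⟩, show ell a b c (Int.fract x) + (⌊x⌋:ℝ)
      = ell a b c (Int.fract x) + ((⌊x⌋:ℤ):ℝ) by norm_num,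
    CircleDeg1Lift.map_add_int,
    key (Int.fract x) (Int.fract_nonneg x) (Int.fract_lt_one x)]
  have : Int.fract x + (⌊x⌋:ℝ) = x := by
    rw [Int.fract]; ring
  linarith

theorem tau_add {a b c : ℝ} (h : good a b c) :
    (LG (1/b) (1/a) (1 - a*c)).translationNumber
      = 1 - (LG a b c).translationNumber := by
  obtain ⟨h1, h2, h3, h4, h5⟩ := h
  have hbc : b * (1 - c) = 1 - a * c := good_bc ⟨h1, h2, h3, h4, h5⟩
  have hK : ∀ x, (LG (1/b) (1/a) (1 - a*c) * LG a b c) x = x + 1 :=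
    fun x => comp_eq ⟨h1, h2, h3, h4, h5⟩ x
  have h' : good (1/b) (1/a) (1 - a*c) := good_inv ⟨h1, h2, h3, h4, h5⟩
  have hK2' := comp_eq h'
  have e1 : 1/(1/a) = a := one_div_one_div a
  have e2 : 1/(1/b) = b := one_div_one_div b
  have e3 : 1 - (1/b)*(1-a*c) = c := by
    rw [← hbc]; field_simp; ring
  rw [e1, e2, e3] at hK2'
  have hK2 : ∀ x, (LG a b c * LG (1/b) (1/a) (1 - a*c)) x = x + 1 := by
    intro x
    exact hK2' x
  have hcomm : Commute (LG (1/b) (1/a) (1 - a*c)) (LG a b c) := by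
    show _ * _ = _ * _
    apply CircleDeg1Lift.ext
    intro x
    rw [hK x, hK2 x]
  have hτmul := CircleDeg1Lift.translationNumber_mul_of_commute hcomm
  have hτ1 : (LG (1/b) (1/a) (1 - a*c) * LG a b c).translationNumber = 1 := by
    have := CircleDeg1Lift.translationNumber_of_eq_add_int
      (f := LG (1/b) (1/a) (1 - a*c) * LG a b c) (x := 0) (m := 1)
      (by rw [hK 0]; push_cast; ring)
    rw [this]; norm_num
  rw [hτ1] at hτmul
  linarith

end LorenzAux

theorem lyapunov_exponent_zero (a b c ρ : ℝ) (F : ℝ → ℝ)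
    (ha : 0 < a) (hb : 0 < b) (hc : c ∈ Set.Ioo (0:ℝ) 1)
    (heq : a * c + b * (1 - c) = 1)
    (hdeg : ∀ x : ℝ, F (x + 1) = F x + 1)
    (hlift : ∀ x : ℝ, Complex.exp (2 * Real.pi * Complex.I * (F x))
      = Complex.exp (2 * Real.pi * Complex.I * (lorenz a b c (Int.fract x))))
    (hF0 : F 0 = lorenz a b c 0)
    (hρ : ∀ x ∈ Set.Icc (0:ℝ) 1,
      Filter.Tendsto (fun n : ℕ => (F^[n] x - x) / n) Filter.atTop (nhds ρ))
    (hirr : Irrational ρ) :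
    ∀ x ∈ Set.Icc (0:ℝ) 1, x ∉ (⋃ n : ℕ, (lorenz a b c)^[n] ⁻¹' {c}) →
      Filter.Tendsto
        (fun n : ℕ => (1 / (n : ℝ)) *
          Real.log (a ^ (n - mcount (lorenz a b c) c n x) *
            b ^ (mcount (lorenz a b c) c n x)))
        Filter.atTop (nhds 0) := by
  classical
  intro x hx hC
  have hg : LorenzAux.good a b c := ⟨ha, hb, hc.1, hc.2, heq⟩
  have hav : ∀ i, (lorenz a b c)^[i] x ≠ c := by
    intro i hcon
    exact hC (Set.mem_iUnion.mpr ⟨i, by simpa using hcon⟩)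
  set τ := (LorenzAux.LG a b c).translationNumber with hτ
  set C : ℝ := |Real.log a - Real.log b| with hCdef
  -- |σ| bound
  have habs : ∀ n : ℕ, (n:ℝ) * |(1-τ)*Real.log a + τ*Real.log b|
      ≤ Real.log (2*(n+1)) + 3*C := by
    intro n
    have hone := LorenzAux.half hg n
    have hg' : LorenzAux.good (1/b) (1/a) (1-a*c) := LorenzAux.good_inv hg
    have htwo := LorenzAux.half hg' n
    rw [LorenzAux.tau_add hg] at htwo
    have hla : Real.log (1/a) = -Real.log a := by rw [one_div, Real.log_inv]
    have hlb : Real.log (1/b) = -Real.log b := by rw [one_div, Real.log_inv]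
    rw [hla, hlb] at htwo
    have e1 : |(-Real.log b) - (-Real.log a)| = C := by
      rw [hCdef, show (-Real.log b) - (-Real.log a) = Real.log a - Real.log b by ring]
    rw [e1] at htwo
    have e2 : (n:ℝ)*((1-(1-τ))*(-Real.log b) + (1-τ)*(-Real.log a))
        = -((n:ℝ)*((1-τ)*Real.log a + τ*Real.log b)) := by ring
    rw [e2] at htwo
    rcases abs_cases ((1-τ)*Real.log a + τ*Real.log b) with ⟨he, -⟩ | ⟨he, -⟩
    · rw [he]; linarith
    · rw [he]; nlinarith [htwo]
  -- pointwise bound on the logarithm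
  have hb2 : ∀ n : ℕ,
      |Real.log (a ^ (n - mcount (lorenz a b c) c n x) *
          b ^ (mcount (lorenz a b c) c n x))|
      ≤ Real.log (2*(n+1)) + 6*C := by
    intro n
    set m := mcount (lorenz a b c) c n x with hm
    have hmn : m ≤ n := LorenzAux.mcount_le _ _ _ _
    have hlogr : Real.log (a ^ (n - m) * b ^ m)
        = ((n:ℝ) - m) * Real.log a + m * Real.log b := by
      rw [Real.log_mul (by positivity) (by positivity), Real.log_pow, Real.log_pow,
        Nat.cast_sub hmn]
    have hmd : |(m:ℝ) - (n:ℝ)*τ| ≤ 3 :=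
      LorenzAux.mdist hg hx n (fun i _ => hav i)
    have hid : ((n:ℝ) - m) * Real.log a + m * Real.log b
        = (n:ℝ)*((1-τ)*Real.log a + τ*Real.log b)
          + ((n:ℝ)*τ - m) * (Real.log a - Real.log b) := by ring
    rw [hlogr, hid]
    calc |(n:ℝ)*((1-τ)*Real.log a + τ*Real.log b)
          + ((n:ℝ)*τ - m) * (Real.log a - Real.log b)|
        ≤ |(n:ℝ)*((1-τ)*Real.log a + τ*Real.log b)|
            + |((n:ℝ)*τ - m) * (Real.log a - Real.log b)| := abs_add_le _ _
      _ ≤ (n:ℝ) * |(1-τ)*Real.log a + τ*Real.log b| + 3 * C := by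
          rw [abs_mul, abs_mul]
          gcongr
          · rw [abs_of_nonneg (by positivity : (0:ℝ) ≤ (n:ℝ))]
          · rwa [abs_sub_comm] at hmd
      _ ≤ (Real.log (2*(n+1)) + 3*C) + 3*C := by
          have := habs n
          gcongr
      _ = Real.log (2*(n+1)) + 6*C := by ring
  -- the squeezing sequence tends to zero
  have hzero : Filter.Tendsto
      (fun n : ℕ => (Real.log (2*((n:ℝ)+1)) + 6*C)/(n:ℝ))
      Filter.atTop (nhds 0) := by
    have hu : Filter.Tendsto (fun n : ℕ => 2*((n:ℝ)+1)) Filter.atTop Filter.atTop := by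
      apply Filter.Tendsto.const_mul_atTop two_pos
      exact Filter.tendsto_atTop_add_const_right _ 1 tendsto_natCast_atTop_atTop
    have hlo : Filter.Tendsto
        (fun n : ℕ => Real.log (2*((n:ℝ)+1)) / (2*((n:ℝ)+1)))
        Filter.atTop (nhds 0) := by
      have := (Real.isLittleO_log_id_atTop.tendsto_div_nhds_zero).comp hu
      exact this
    have hratio : Filter.Tendsto (fun n : ℕ => (2*((n:ℝ)+1))/(n:ℝ))
        Filter.atTop (nhds 2) := by
      have heq' : ∀ᶠ n : ℕ in Filter.atTop,
          2 + 2/(n:ℝ) = (2*((n:ℝ)+1))/(n:ℝ) := by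
        filter_upwards [Filter.eventually_ge_atTop 1] with n hn
        have hne : (n:ℝ) ≠ 0 := by
          have : (1:ℝ) ≤ (n:ℝ) := by exact_mod_cast hn
          linarith
        field_simp
      have h2 : Filter.Tendsto (fun n : ℕ => 2 + 2/(n:ℝ)) Filter.atTop (nhds 2) := by
        have := tendsto_const_div_atTop_nhds_zero_nat (2:ℝ)
        simpa using (tendsto_const_nhds (x := (2:ℝ))).add this
      exact Filter.Tendsto.congr' heq' h2
    have hmain : Filter.Tendsto (fun n : ℕ => Real.log (2*((n:ℝ)+1))/(n:ℝ))
        Filter.atTop (nhds 0) := by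
      have heq' : ∀ᶠ n : ℕ in Filter.atTop,
          (Real.log (2*((n:ℝ)+1)) / (2*((n:ℝ)+1))) * ((2*((n:ℝ)+1))/(n:ℝ))
            = Real.log (2*((n:ℝ)+1))/(n:ℝ) := by
        filter_upwards [Filter.eventually_ge_atTop 1] with n hn
        have hne : (n:ℝ) ≠ 0 := by
          have : (1:ℝ) ≤ (n:ℝ) := by exact_mod_cast hn
          linarith
        have hne2 : 2*((n:ℝ)+1) ≠ 0 := by positivity
        field_simp
      have := hlo.mul hratio
      rw [zero_mul] at this
      exact Filter.Tendsto.congr' heq' this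
    have hconst : Filter.Tendsto (fun n : ℕ => (6*C)/(n:ℝ)) Filter.atTop (nhds 0) :=
      tendsto_const_div_atTop_nhds_zero_nat (6*C)
    have := hmain.add hconst
    rw [add_zero] at this
    apply this.congr
    intro n
    rw [add_div]
  -- conclude by squeezing
  apply squeeze_zero_norm' _ hzero
  filter_upwards [Filter.eventually_ge_atTop 1] with n hn
  have hnpos : (0:ℝ) < (n:ℝ) := by
    have : (1:ℝ) ≤ (n:ℝ) := by exact_mod_cast hn
    linarith
  rw [Real.norm_eq_abs, abs_mul, abs_of_nonneg (by positivity : (0:ℝ) ≤ 1/(n:ℝ))]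
  calc (1/(n:ℝ)) * |Real.log (a ^ (n - mcount (lorenz a b c) c n x) *
        b ^ (mcount (lorenz a b c) c n x))|
      ≤ (1/(n:ℝ)) * (Real.log (2*((n:ℝ)+1)) + 6*C) := by
        exact mul_le_mul_of_nonneg_left (hb2 n) (by positivity)
    _ = (Real.log (2*((n:ℝ)+1)) + 6*C)/(n:ℝ) := by
        rw [one_div, inv_mul_eq_div]
end

section
/- Let f_{a,b,c} be a piecewise linear Lorenz map with ac + b(1-c) = 1 and log a / log b irrational. Then there exists a constant r > 0 (explicitly r = min{(a/b)^4, (b/a)^4}) such that for all n ≥ 1 and all Borel sets A ⊆ [0,1], r·m(A) ≤ m(f^{-n}(A)) ≤ m(A)/r, where m is Lebesgue measure. -/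
open MeasureTheory
open scoped ENNReal

namespace LorenzAux

/-- `d = b(1-c) = 1 - ac`, the break value. -/
noncomputable def dd (b c : ℝ) : ℝ := b * (1 - c)

/-- Inverse of the Lorenz map on `[0,1)`. -/
noncomputable def ginv (a b c : ℝ) : ℝ → ℝ := fun y =>
  if y < dd b c then y / b + c else (y - dd b c) / a

/-- Lift of `ginv` to `ℝ` (a monotone map commuting with `x ↦ x+1`). -/
noncomputable def GG (a b c : ℝ) : ℝ → ℝ := fun x =>
  (⌊x⌋ : ℝ) + (if Int.fract x < dd b c then Int.fract x / b + (c - 1)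
    else (Int.fract x - dd b c) / a)

/-- Number of visits of the `ginv`-orbit to `[0,d)` in the first `n` steps. -/
noncomputable def beta (a b c : ℝ) (n : ℕ) (y : ℝ) : ℕ :=
  ∑ i ∈ Finset.range n, if (ginv a b c)^[i] y < dd b c then 1 else 0

/-- The density of the image of Lebesgue measure under `ginv^[n]`. -/
noncomputable def DD (a b c : ℝ) (n : ℕ) (y : ℝ) : ℝ :=
  ∏ i ∈ Finset.range n, if (ginv a b c)^[i] y < dd b c then 1 / b else 1 / a

section Basic

variable {a b c : ℝ}

lemma dd_def : dd b c = b * (1 - c) := rfl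

lemma dd_pos (hb : 0 < b) (hc1 : c < 1) : 0 < dd b c := by
  have : 0 < 1 - c := by linarith
  exact mul_pos hb this

lemma one_sub_dd (heq : a * c + b * (1 - c) = 1) : 1 - dd b c = a * c := by
  simp only [dd_def]; linarith

lemma dd_lt_one (ha : 0 < a) (hc0 : 0 < c) (heq : a * c + b * (1 - c) = 1) :
    dd b c < 1 := by
  have h := one_sub_dd (a := a) heq
  nlinarith

lemma ginv_left {y : ℝ} (hy : y < dd b c) : ginv a b c y = y / b + c := if_pos hy

lemma ginv_right {y : ℝ} (hy : ¬ y < dd b c) : ginv a b c y = (y - dd b c) / a := if_neg hy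

lemma ginv_mem_left (hb : 0 < b) {y : ℝ} (hy : y ∈ Set.Ico 0 (dd b c)) :
    ginv a b c y ∈ Set.Ico c 1 := by
  rw [ginv_left hy.2]
  constructor
  · have : 0 ≤ y / b := div_nonneg hy.1 hb.le
    linarith
  · have h1 : y / b < dd b c / b := by gcongr; exact hy.2
    have h2 : dd b c / b = 1 - c := by field_simp [dd_def]; rfl
    linarith

lemma ginv_mem_right (ha : 0 < a) (heq : a * c + b * (1 - c) = 1) {y : ℝ}
    (hy : y ∈ Set.Ico (dd b c) 1) : ginv a b c y ∈ Set.Ico 0 c := by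
  rw [ginv_right (not_lt.2 hy.1)]
  constructor
  · exact div_nonneg (sub_nonneg.2 hy.1) ha.le
  · rw [div_lt_iff₀ ha]
    have := one_sub_dd (a := a) (b := b) (c := c) heq
    nlinarith [hy.2]

lemma ginv_mem (ha : 0 < a) (hb : 0 < b) (hc0 : 0 < c) (hc1 : c < 1)
    (heq : a * c + b * (1 - c) = 1) {y : ℝ} (hy : y ∈ Set.Ico (0:ℝ) 1) :
    ginv a b c y ∈ Set.Ico (0:ℝ) 1 := by
  by_cases h : y < dd b c
  · have := ginv_mem_left (a := a) hb ⟨hy.1, h⟩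
    exact ⟨le_trans hc0.le this.1, this.2⟩
  · have := ginv_mem_right ha heq ⟨not_lt.1 h, hy.2⟩
    exact ⟨this.1, lt_trans this.2 hc1⟩

lemma ginv_iter_mem (ha : 0 < a) (hb : 0 < b) (hc0 : 0 < c) (hc1 : c < 1)
    (heq : a * c + b * (1 - c) = 1) (n : ℕ) {y : ℝ} (hy : y ∈ Set.Ico (0:ℝ) 1) :
    (ginv a b c)^[n] y ∈ Set.Ico (0:ℝ) 1 := by
  induction n with
  | zero => simpa using hy
  | succ n ih =>
      rw [Function.iterate_succ_apply']
      exact ginv_mem ha hb hc0 hc1 heq ih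

lemma lorenz_ginv (ha : 0 < a) (hb : 0 < b) (heq : a * c + b * (1 - c) = 1)
    {y : ℝ} (hy : y ∈ Set.Ico (0:ℝ) 1) : lorenz a b c (ginv a b c y) = y := by
  by_cases h : y < dd b c
  · rw [ginv_left h]
    have hnc : ¬ (y / b + c < c) := by
      have : 0 ≤ y / b := div_nonneg hy.1 hb.le
      linarith
    rw [lorenz, if_neg hnc]
    field_simp
    ring
  · rw [ginv_right h]
    have hc' : (y - dd b c) / a < c := by
      rw [div_lt_iff₀ ha]
      have := one_sub_dd (a := a) (b := b) (c := c) heq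
      nlinarith [hy.2]
    rw [lorenz, if_pos hc']
    have hd := one_sub_dd (a := a) (b := b) (c := c) heq
    field_simp
    linarith

lemma ginv_lorenz (ha : 0 < a) (hb : 0 < b) (heq : a * c + b * (1 - c) = 1)
    {x : ℝ} (hx : x ∈ Set.Ico (0:ℝ) 1) : ginv a b c (lorenz a b c x) = x := by
  have hd := one_sub_dd (a := a) (b := b) (c := c) heq
  by_cases h : x < c
  · have hfx : lorenz a b c x = a * x + 1 - a * c := if_pos h
    have hge : ¬ (lorenz a b c x < dd b c) := by
      rw [hfx]
      have : 0 ≤ a * x := mul_nonneg ha.le hx.1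
      push_neg
      linarith
    rw [ginv_right hge, hfx]
    field_simp
    linarith
  · have hfx : lorenz a b c x = b * (x - c) := if_neg h
    have hlt : lorenz a b c x < dd b c := by
      rw [hfx, dd_def]
      have : x - c < 1 - c := by linarith [hx.2]
      nlinarith
    rw [ginv_left hlt, hfx]
    field_simp
    ring

lemma lorenz_mem_s6 (ha : 0 < a) (hb : 0 < b) (hc0 : 0 < c) (hc1 : c < 1)
    (heq : a * c + b * (1 - c) = 1) {x : ℝ} (hx : x ∈ Set.Ico (0:ℝ) 1) :
    lorenz a b c x ∈ Set.Ico (0:ℝ) 1 := by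
  have hd := one_sub_dd (a := a) (b := b) (c := c) heq
  have hdpos := dd_pos hb hc1
  have hdlt := dd_lt_one ha hc0 heq
  by_cases h : x < c
  · rw [lorenz, if_pos h]
    constructor
    · have : 0 ≤ a * x := mul_nonneg ha.le hx.1
      linarith
    · have : a * x < a * c := by nlinarith
      linarith
  · rw [lorenz, if_neg h]
    constructor
    · have : c ≤ x := not_lt.1 h
      nlinarith
    · have : b * (x - c) < b * (1 - c) := by nlinarith [hx.2]
      rw [← dd_def] at this
      linarith

lemma pre_eq (ha : 0 < a) (hb : 0 < b) (hc0 : 0 < c) (hc1 : c < 1)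
    (heq : a * c + b * (1 - c) = 1) (B : Set ℝ) :
    Set.Ico (0:ℝ) 1 ∩ lorenz a b c ⁻¹' B = ginv a b c '' (B ∩ Set.Ico 0 1) := by
  ext x
  constructor
  · rintro ⟨hx, hfx⟩
    exact ⟨lorenz a b c x, ⟨hfx, lorenz_mem_s6 ha hb hc0 hc1 heq hx⟩,
      ginv_lorenz ha hb heq hx⟩
  · rintro ⟨y, ⟨hyB, hy01⟩, rfl⟩
    refine ⟨ginv_mem ha hb hc0 hc1 heq hy01, ?_⟩
    rw [Set.mem_preimage, lorenz_ginv ha hb heq hy01]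
    exact hyB

lemma pre_iter_eq (ha : 0 < a) (hb : 0 < b) (hc0 : 0 < c) (hc1 : c < 1)
    (heq : a * c + b * (1 - c) = 1) (n : ℕ) (B : Set ℝ) :
    Set.Ico (0:ℝ) 1 ∩ (lorenz a b c)^[n] ⁻¹' B
      = (ginv a b c)^[n] '' (B ∩ Set.Ico 0 1) := by
  induction n generalizing B with
  | zero => simp [Set.inter_comm]
  | succ n ih =>
      rw [Function.iterate_succ, Set.preimage_comp]
      rw [pre_eq ha hb hc0 hc1 heq]
      have : (lorenz a b c)^[n] ⁻¹' B ∩ Set.Ico 0 1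
          = Set.Ico (0:ℝ) 1 ∩ (lorenz a b c)^[n] ⁻¹' B := Set.inter_comm _ _
      rw [this, ih]
      rw [Function.iterate_succ', Set.image_comp]

end Basic

end LorenzAux

namespace LorenzAux

section Meas

variable {a b c : ℝ}

lemma volume_affine (p t : ℝ) (hp : 0 < p) (T : Set ℝ) :
    volume ((fun x => p * x + t) ⁻¹' T) = ENNReal.ofReal (1 / p) * volume T := by
  have h1 : (fun x : ℝ => p * x + t) ⁻¹' T = (p * ·) ⁻¹' ((· + t) ⁻¹' T) := rfl
  rw [h1, Real.volume_preimage_mul_left (ne_of_gt hp), measure_preimage_add_right]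
  congr 1
  rw [abs_of_pos (inv_pos.2 hp), one_div]

lemma image_left (hb : 0 < b) (S : Set ℝ) (hS : S ⊆ Set.Ico 0 (dd b c)) :
    ginv a b c '' S = (fun x => b * x + (-(b * c))) ⁻¹' S := by
  ext x
  constructor
  · rintro ⟨y, hyS, rfl⟩
    have h := (hS hyS).2
    rw [ginv_left h]
    have : b * (y / b + c) + -(b * c) = y := by field_simp; ring
    simpa [this] using hyS
  · intro hx
    refine ⟨b * x + -(b * c), hx, ?_⟩
    rw [ginv_left (hS hx).2]
    field_simp
    ring

lemma image_right (ha : 0 < a) (S : Set ℝ) (hS : S ⊆ Set.Ico (dd b c) 1) :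
    ginv a b c '' S = (fun x => a * x + dd b c) ⁻¹' S := by
  ext x
  constructor
  · rintro ⟨y, hyS, rfl⟩
    have h := (hS hyS).1
    rw [ginv_right (not_lt.2 h)]
    have : a * ((y - dd b c) / a) + dd b c = y := by field_simp; ring
    simpa [this] using hyS
  · intro hx
    refine ⟨a * x + dd b c, hx, ?_⟩
    rw [ginv_right (not_lt.2 (hS hx).1)]
    field_simp
    ring

lemma step_meas_vol (ha : 0 < a) (hb : 0 < b) (hc0 : 0 < c) (hc1 : c < 1)
    (heq : a * c + b * (1 - c) = 1) (S : Set ℝ) (hSm : MeasurableSet S)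
    (hS : S ⊆ Set.Ico 0 1) :
    MeasurableSet (ginv a b c '' S) ∧
      volume (ginv a b c '' S)
        = ENNReal.ofReal (1 / b) * volume (S ∩ Set.Iio (dd b c))
          + ENNReal.ofReal (1 / a) * volume (S ∩ Set.Ici (dd b c)) := by
  have hd := one_sub_dd (a := a) (b := b) (c := c) heq
  have hs1 : S ∩ Set.Iio (dd b c) ⊆ Set.Ico 0 (dd b c) :=
    fun x hx => ⟨(hS hx.1).1, hx.2⟩
  have hs2 : S ∩ Set.Ici (dd b c) ⊆ Set.Ico (dd b c) 1 :=
    fun x hx => ⟨hx.2, (hS hx.1).2⟩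
  have hsplit : ginv a b c '' S
      = (fun x => b * x + (-(b * c))) ⁻¹' (S ∩ Set.Iio (dd b c))
        ∪ (fun x => a * x + dd b c) ⁻¹' (S ∩ Set.Ici (dd b c)) := by
    conv_lhs => rw [show S = (S ∩ Set.Iio (dd b c)) ∪ (S ∩ Set.Ici (dd b c)) by
      rw [← Set.inter_union_distrib_left, Set.Iio_union_Ici, Set.inter_univ]]
    rw [Set.image_union, image_left hb _ hs1, image_right ha _ hs2]
  have hmf1 : Measurable (fun x : ℝ => b * x + (-(b * c))) :=
    (measurable_id.const_mul b).add_const _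
  have hmf2 : Measurable (fun x : ℝ => a * x + dd b c) :=
    (measurable_id.const_mul a).add_const _
  have hm1 : MeasurableSet ((fun x => b * x + (-(b * c))) ⁻¹' (S ∩ Set.Iio (dd b c))) :=
    hmf1 (hSm.inter measurableSet_Iio)
  have hm2 : MeasurableSet ((fun x => a * x + dd b c) ⁻¹' (S ∩ Set.Ici (dd b c))) :=
    hmf2 (hSm.inter measurableSet_Ici)
  have hdisj : Disjoint ((fun x => b * x + (-(b * c))) ⁻¹' (S ∩ Set.Iio (dd b c)))
      ((fun x => a * x + dd b c) ⁻¹' (S ∩ Set.Ici (dd b c))) := by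
    rw [Set.disjoint_left]
    intro x h1 h2
    have e1 : 0 ≤ b * x + -(b * c) := (hs1 h1).1
    have e2 : a * x + dd b c < 1 := (hs2 h2).2
    have hxc : c ≤ x := by nlinarith
    have hxc' : x < c := by nlinarith
    linarith
  constructor
  · rw [hsplit]; exact hm1.union hm2
  · rw [hsplit, measure_union hdisj hm2, volume_affine b (-(b*c)) hb,
      volume_affine a (dd b c) ha]

lemma ginv_measurable : Measurable (ginv a b c) := by
  unfold ginv
  exact Measurable.ite measurableSet_Iio
    ((measurable_id.div_const b).add_const c)
    ((measurable_id.sub_const _).div_const a)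

lemma DD_nonneg (ha : 0 < a) (hb : 0 < b) (n : ℕ) (y : ℝ) : 0 ≤ DD a b c n y := by
  refine Finset.prod_nonneg fun i _ => ?_
  split <;> positivity

lemma DD_measurable (n : ℕ) : Measurable (fun y => DD a b c n y) := by
  refine Finset.measurable_prod _ fun i _ => ?_
  exact Measurable.ite ((ginv_measurable.iterate i) measurableSet_Iio)
    measurable_const measurable_const

lemma claimA (ha : 0 < a) (hb : 0 < b) (hc0 : 0 < c) (hc1 : c < 1)
    (heq : a * c + b * (1 - c) = 1) :
    ∀ (n : ℕ) (S : Set ℝ), MeasurableSet S → S ⊆ Set.Ico 0 1 →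
      MeasurableSet ((ginv a b c)^[n] '' S) ∧
        volume ((ginv a b c)^[n] '' S) = ∫⁻ y in S, ENNReal.ofReal (DD a b c n y) := by
  intro n
  induction n with
  | zero =>
      intro S hSm hS
      refine ⟨by simpa using hSm, ?_⟩
      simp only [Function.iterate_zero, Set.image_id, DD, Finset.range_zero,
        Finset.prod_empty, ENNReal.ofReal_one]
      rw [setLIntegral_one]
  | succ n ih =>
      intro S hSm hS
      have hgnm : Measurable ((ginv a b c)^[n]) := ginv_measurable.iterate n
      set U : Set ℝ := (ginv a b c)^[n] ⁻¹' (Set.Iio (dd b c)) with hU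
      have hUm : MeasurableSet U := hgnm measurableSet_Iio
      have hS1m : MeasurableSet (S ∩ U) := hSm.inter hUm
      have hS2m : MeasurableSet (S ∩ Uᶜ) := hSm.inter hUm.compl
      have h1 := ih (S ∩ U) hS1m (Set.inter_subset_left.trans hS)
      have h2 := ih (S ∩ Uᶜ) hS2m (Set.inter_subset_left.trans hS)
      have hTfull := ih S hSm hS
      have hT : (ginv a b c)^[n] '' S ⊆ Set.Ico 0 1 := by
        rintro y ⟨x, hx, rfl⟩
        exact ginv_iter_mem ha hb hc0 hc1 heq n (hS hx)
      have himg : (ginv a b c)^[n+1] '' S = ginv a b c '' ((ginv a b c)^[n] '' S) := by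
        rw [Function.iterate_succ', Set.image_comp]
      obtain ⟨hmeas', hvol'⟩ :=
        step_meas_vol ha hb hc0 hc1 heq _ hTfull.1 hT
      refine ⟨himg ▸ hmeas', ?_⟩
      rw [himg, hvol']
      have e1 : (ginv a b c)^[n] '' S ∩ Set.Iio (dd b c) = (ginv a b c)^[n] '' (S ∩ U) :=
        (Set.image_inter_preimage _ _ _).symm
      have hUc : Uᶜ = (ginv a b c)^[n] ⁻¹' (Set.Ici (dd b c)) := by
        rw [hU, ← Set.preimage_compl, Set.compl_Iio]
      have e2 : (ginv a b c)^[n] '' S ∩ Set.Ici (dd b c) = (ginv a b c)^[n] '' (S ∩ Uᶜ) := by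
        rw [hUc]
        exact (Set.image_inter_preimage _ _ _).symm
      rw [e1, e2, h1.2, h2.2]
      have hsplitS : ∫⁻ y in S, ENNReal.ofReal (DD a b c (n+1) y)
          = (∫⁻ y in S ∩ U, ENNReal.ofReal (DD a b c (n+1) y))
            + ∫⁻ y in S ∩ Uᶜ, ENNReal.ofReal (DD a b c (n+1) y) := by
        conv_lhs => rw [show S = (S ∩ U) ∪ (S ∩ Uᶜ) from (Set.inter_union_compl S U).symm]
        exact lintegral_union hS2m
          (Disjoint.mono Set.inter_subset_right Set.inter_subset_right disjoint_compl_right)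
      rw [hsplitS]
      congr 1
      · have hcong : ∫⁻ y in S ∩ U, ENNReal.ofReal (DD a b c (n+1) y)
            = ∫⁻ y in S ∩ U, ENNReal.ofReal (1/b) * ENNReal.ofReal (DD a b c n y) := by
          refine setLIntegral_congr_fun hS1m (fun y hy => ?_)
          have hyU : (ginv a b c)^[n] y < dd b c := hy.2
          have : DD a b c (n+1) y = DD a b c n y * (1/b) := by
            rw [DD, Finset.prod_range_succ, if_pos hyU]; rfl
          rw [this, ENNReal.ofReal_mul (DD_nonneg ha hb n y), mul_comm]
        rw [hcong, lintegral_const_mul' _ _ ENNReal.ofReal_ne_top]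
      · have hcong : ∫⁻ y in S ∩ Uᶜ, ENNReal.ofReal (DD a b c (n+1) y)
            = ∫⁻ y in S ∩ Uᶜ, ENNReal.ofReal (1/a) * ENNReal.ofReal (DD a b c n y) := by
          refine setLIntegral_congr_fun hS2m (fun y hy => ?_)
          have hyU : ¬ ((ginv a b c)^[n] y < dd b c) := by
            have := hy.2
            rw [hUc] at this
            exact not_lt.2 this
          have : DD a b c (n+1) y = DD a b c n y * (1/a) := by
            rw [DD, Finset.prod_range_succ, if_neg hyU]; rfl
          rw [this, ENNReal.ofReal_mul (DD_nonneg ha hb n y), mul_comm]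
        rw [hcong, lintegral_const_mul' _ _ ENNReal.ofReal_ne_top]

end Meas
end LorenzAux

namespace LorenzAux

section Comb
variable {a b c : ℝ}

lemma image_Ico (ha : 0 < a) (hb : 0 < b) (hc0 : 0 < c) (hc1 : c < 1)
    (heq : a * c + b * (1 - c) = 1) :
    ginv a b c '' Set.Ico 0 1 = Set.Ico (0:ℝ) 1 := by
  have hd := one_sub_dd (a := a) (b := b) (c := c) heq
  have hdpos := dd_pos hb hc1
  have hdlt := dd_lt_one ha hc0 heq
  apply Set.Subset.antisymm
  · rintro _ ⟨y, hy, rfl⟩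
    exact ginv_mem ha hb hc0 hc1 heq hy
  · intro y hy
    rcases lt_or_ge y c with h | h
    · refine ⟨a * y + dd b c, ⟨by nlinarith [hy.1], by nlinarith⟩, ?_⟩
      have hge : ¬ (a * y + dd b c < dd b c) := by
        push_neg; nlinarith [hy.1]
      rw [ginv_right hge]
      field_simp
      ring
    · refine ⟨b * (y - c), ⟨by nlinarith, by nlinarith [hy.2]⟩, ?_⟩
      have hlt : b * (y - c) < dd b c := by rw [dd_def]; nlinarith [hy.2]
      rw [ginv_left hlt]
      field_simp
      ring

lemma iter_image_Ico (ha : 0 < a) (hb : 0 < b) (hc0 : 0 < c) (hc1 : c < 1)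
    (heq : a * c + b * (1 - c) = 1) (n : ℕ) :
    (ginv a b c)^[n] '' Set.Ico 0 1 = Set.Ico (0:ℝ) 1 := by
  induction n with
  | zero => simp
  | succ n ih =>
      rw [Function.iterate_succ', Set.image_comp, ih, image_Ico ha hb hc0 hc1 heq]

lemma DD_normalized (ha : 0 < a) (hb : 0 < b) (hc0 : 0 < c) (hc1 : c < 1)
    (heq : a * c + b * (1 - c) = 1) (n : ℕ) :
    ∫⁻ y in Set.Ico (0:ℝ) 1, ENNReal.ofReal (DD a b c n y) = 1 := by
  have h := (claimA ha hb hc0 hc1 heq n (Set.Ico 0 1) measurableSet_Ico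
    Set.Subset.rfl).2
  rw [iter_image_Ico ha hb hc0 hc1 heq] at h
  rw [← h, Real.volume_Ico]
  norm_num

lemma beta_le (n : ℕ) (y : ℝ) : beta a b c n y ≤ n := by
  unfold beta
  calc ∑ i ∈ Finset.range n, (if (ginv a b c)^[i] y < dd b c then 1 else 0)
      ≤ ∑ _i ∈ Finset.range n, 1 := by
        refine Finset.sum_le_sum fun i _ => ?_
        split <;> omega
    _ = n := by simp

lemma DD_eq (ha : 0 < a) (hb : 0 < b) (n : ℕ) (y : ℝ) :
    DD a b c n y = (1/b) ^ (beta a b c n y) * (1/a) ^ (n - beta a b c n y) := by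
  induction n with
  | zero => simp [DD, beta]
  | succ n ih =>
      have hble := beta_le (a := a) (b := b) (c := c) n y
      rw [DD, Finset.prod_range_succ, ← DD, ih]
      by_cases h : (ginv a b c)^[n] y < dd b c
      · have hbeta : beta a b c (n+1) y = beta a b c n y + 1 := by
          unfold beta; rw [Finset.sum_range_succ, if_pos h]
        rw [if_pos h, hbeta]
        have : n + 1 - (beta a b c n y + 1) = n - beta a b c n y := by omega
        rw [this, pow_succ]
        ring
      · have hbeta : beta a b c (n+1) y = beta a b c n y := by
          unfold beta; rw [Finset.sum_range_succ, if_neg h]; ring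
        rw [if_neg h, hbeta]
        have : n + 1 - beta a b c n y = (n - beta a b c n y) + 1 := by omega
        rw [this, pow_succ]
        ring

/-! ### The lift `GG` -/

lemma GG_floor_fract (ha : 0 < a) (hb : 0 < b) (hc0 : 0 < c) (hc1 : c < 1)
    (heq : a * c + b * (1 - c) = 1) (x : ℝ) :
    ⌊GG a b c x⌋ = ⌊x⌋ - (if Int.fract x < dd b c then 1 else 0) ∧
      Int.fract (GG a b c x) = ginv a b c (Int.fract x) := by
  have ht : Int.fract x ∈ Set.Ico (0:ℝ) 1 := ⟨Int.fract_nonneg x, Int.fract_lt_one x⟩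
  by_cases h : Int.fract x < dd b c
  · have hmem : ginv a b c (Int.fract x) ∈ Set.Ico c 1 := ginv_mem_left hb ⟨ht.1, h⟩
    have hmem' : ginv a b c (Int.fract x) ∈ Set.Ico (0:ℝ) 1 :=
      ⟨le_trans hc0.le hmem.1, hmem.2⟩
    have hG : GG a b c x = ((⌊x⌋ - 1 : ℤ) : ℝ) + ginv a b c (Int.fract x) := by
      rw [GG, if_pos h, ginv_left h]
      push_cast
      ring
    rw [hG, Int.floor_intCast_add, Int.fract_intCast_add,
      Int.floor_eq_zero_iff.2 hmem', Int.fract_eq_self.2 ⟨hmem'.1, hmem'.2⟩]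
    simp [h]
  · have hmem : ginv a b c (Int.fract x) ∈ Set.Ico (0:ℝ) c :=
      ginv_mem_right ha heq ⟨not_lt.1 h, ht.2⟩
    have hmem' : ginv a b c (Int.fract x) ∈ Set.Ico (0:ℝ) 1 :=
      ⟨hmem.1, lt_trans hmem.2 hc1⟩
    have hG : GG a b c x = ((⌊x⌋ : ℤ) : ℝ) + ginv a b c (Int.fract x) := by
      rw [GG, if_neg h, ginv_right h]
    rw [hG, Int.floor_intCast_add, Int.fract_intCast_add,
      Int.floor_eq_zero_iff.2 hmem', Int.fract_eq_self.2 ⟨hmem'.1, hmem'.2⟩]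
    simp [h]

lemma GG_add_one (x : ℝ) : GG a b c (x + 1) = GG a b c x + 1 := by
  have h1 : Int.fract (x + 1) = Int.fract x := by simpa using Int.fract_add_int x 1
  have h2 : ⌊x + 1⌋ = ⌊x⌋ + 1 := by simpa using Int.floor_add_int x 1
  rw [GG, GG, h1, h2]
  push_cast
  ring

lemma GG_mono (ha : 0 < a) (hb : 0 < b) (hc0 : 0 < c) (hc1 : c < 1)
    (heq : a * c + b * (1 - c) = 1) : Monotone (GG a b c) := by
  have hd := one_sub_dd (a := a) (b := b) (c := c) heq
  have hdpos := dd_pos hb hc1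
  have hddb : dd b c / b = 1 - c := by field_simp [dd_def]; rfl
  -- bounds for the "inner" part, for t ∈ [0,1)
  have inner_lt : ∀ t : ℝ, t ∈ Set.Ico (0:ℝ) 1 →
      (if t < dd b c then t / b + (c - 1) else (t - dd b c) / a) < c := by
    intro t ht
    by_cases h : t < dd b c
    · rw [if_pos h]
      have : t / b < dd b c / b := by gcongr
      linarith
    · rw [if_neg h]
      rw [div_lt_iff₀ ha]
      nlinarith [ht.2]
  have inner_ge : ∀ t : ℝ, t ∈ Set.Ico (0:ℝ) 1 →
      c - 1 ≤ (if t < dd b c then t / b + (c - 1) else (t - dd b c) / a) := by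
    intro t ht
    by_cases h : t < dd b c
    · rw [if_pos h]
      have : 0 ≤ t / b := div_nonneg ht.1 hb.le
      linarith
    · rw [if_neg h]
      have : 0 ≤ (t - dd b c) / a := div_nonneg (by linarith [not_lt.1 h]) ha.le
      linarith
  intro x y hxy
  have hfl : ⌊x⌋ ≤ ⌊y⌋ := Int.floor_mono hxy
  have htx : Int.fract x ∈ Set.Ico (0:ℝ) 1 := ⟨Int.fract_nonneg x, Int.fract_lt_one x⟩
  have hty : Int.fract y ∈ Set.Ico (0:ℝ) 1 := ⟨Int.fract_nonneg y, Int.fract_lt_one y⟩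
  rcases eq_or_lt_of_le hfl with h | h
  · have hfr : Int.fract x ≤ Int.fract y := by
      have hx' : Int.fract x = x - (⌊x⌋ : ℝ) := rfl
      have hy' : Int.fract y = y - (⌊y⌋ : ℝ) := rfl
      rw [hx', hy', ← h]
      linarith
    rw [GG, GG, ← h]
    have : (if Int.fract x < dd b c then Int.fract x / b + (c - 1)
        else (Int.fract x - dd b c) / a)
        ≤ (if Int.fract y < dd b c then Int.fract y / b + (c - 1)
        else (Int.fract y - dd b c) / a) := by
      by_cases p1 : Int.fract x < dd b c <;> by_cases p2 : Int.fract y < dd b c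
      · rw [if_pos p1, if_pos p2]
        have : Int.fract x / b ≤ Int.fract y / b := by gcongr
        linarith
      · rw [if_pos p1, if_neg p2]
        have e1 : Int.fract x / b ≤ dd b c / b := by gcongr
        have e2 : 0 ≤ (Int.fract y - dd b c) / a :=
          div_nonneg (by linarith [not_lt.1 p2]) ha.le
        linarith
      · exact absurd (lt_of_le_of_lt hfr p2) p1
      · rw [if_neg p1, if_neg p2]
        gcongr
    linarith
  · have h1 : (⌊x⌋ : ℝ) + 1 ≤ (⌊y⌋ : ℝ) := by exact_mod_cast Int.lt_iff_add_one_le.1 h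
    have h2 := inner_lt _ htx
    have h3 := inner_ge _ hty
    rw [GG, GG]
    linarith

lemma GG_iter_add_one (n : ℕ) (x : ℝ) :
    (GG a b c)^[n] (x + 1) = (GG a b c)^[n] x + 1 := by
  induction n with
  | zero => simp
  | succ n ih =>
      rw [Function.iterate_succ_apply', Function.iterate_succ_apply', ih, GG_add_one]

lemma floor_fract_iter (ha : 0 < a) (hb : 0 < b) (hc0 : 0 < c) (hc1 : c < 1)
    (heq : a * c + b * (1 - c) = 1) {y : ℝ} (hy : y ∈ Set.Ico (0:ℝ) 1) (n : ℕ) :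
    Int.fract ((GG a b c)^[n] y) = (ginv a b c)^[n] y ∧
      ⌊(GG a b c)^[n] y⌋ = -(beta a b c n y : ℤ) := by
  induction n with
  | zero =>
      refine ⟨Int.fract_eq_self.2 ⟨hy.1, hy.2⟩, ?_⟩
      simp [beta, Int.floor_eq_zero_iff.2 hy]
  | succ n ih =>
      obtain ⟨hf, hfl⟩ := ih
      rw [Function.iterate_succ_apply', Function.iterate_succ_apply']
      obtain ⟨h1, h2⟩ := GG_floor_fract ha hb hc0 hc1 heq ((GG a b c)^[n] y)
      rw [hf] at h1 h2
      refine ⟨h2, ?_⟩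
      rw [h1, hfl]
      have : beta a b c (n+1) y
          = beta a b c n y + (if (ginv a b c)^[n] y < dd b c then 1 else 0) := by
        unfold beta; rw [Finset.sum_range_succ]
      rw [this]
      by_cases h : (ginv a b c)^[n] y < dd b c <;> simp [h] <;> push_cast <;> ring

lemma beta_diff (ha : 0 < a) (hb : 0 < b) (hc0 : 0 < c) (hc1 : c < 1)
    (heq : a * c + b * (1 - c) = 1) {y y' : ℝ} (hy : y ∈ Set.Ico (0:ℝ) 1)
    (hy' : y' ∈ Set.Ico (0:ℝ) 1) (n : ℕ) :
    (beta a b c n y : ℤ) ≤ beta a b c n y' + 1 := by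
  have hmono := (GG_mono ha hb hc0 hc1 heq).iterate n
  have m1 : (GG a b c)^[n] 0 ≤ (GG a b c)^[n] y := hmono hy.1
  have m2 : (GG a b c)^[n] y' ≤ (GG a b c)^[n] 0 + 1 := by
    have : (GG a b c)^[n] y' ≤ (GG a b c)^[n] (0 + 1) := hmono (by linarith [hy'.2])
    rwa [GG_iter_add_one] at this
  have f1 : ⌊(GG a b c)^[n] 0⌋ ≤ ⌊(GG a b c)^[n] y⌋ := Int.floor_mono m1
  have f2 : ⌊(GG a b c)^[n] y'⌋ ≤ ⌊(GG a b c)^[n] 0⌋ + 1 := by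
    calc ⌊(GG a b c)^[n] y'⌋ ≤ ⌊(GG a b c)^[n] 0 + 1⌋ := Int.floor_mono m2
      _ = ⌊(GG a b c)^[n] 0⌋ + 1 := by simpa using Int.floor_add_int ((GG a b c)^[n] 0) 1
  rw [(floor_fract_iter ha hb hc0 hc1 heq hy n).2] at f1
  rw [(floor_fract_iter ha hb hc0 hc1 heq hy' n).2] at f2
  omega

end Comb
end LorenzAux


namespace LorenzAux

section Final
variable {a b c : ℝ}

lemma q_pos (ha : 0 < a) (hb : 0 < b) : 0 < min (a/b) (b/a) :=
  lt_min (div_pos ha hb) (div_pos hb ha)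

lemma q_le_one (ha : 0 < a) (hb : 0 < b) : min (a/b) (b/a) ≤ 1 := by
  rcases le_total a b with h | h
  · exact le_trans (min_le_left _ _) (by rw [div_le_one hb]; exact h)
  · exact le_trans (min_le_right _ _) (by rw [div_le_one ha]; exact h)

lemma DD_ratio (ha : 0 < a) (hb : 0 < b) (hc0 : 0 < c) (hc1 : c < 1)
    (heq : a * c + b * (1 - c) = 1) {y y' : ℝ} (hy : y ∈ Set.Ico (0:ℝ) 1)
    (hy' : y' ∈ Set.Ico (0:ℝ) 1) (n : ℕ) :
    DD a b c n y ≤ DD a b c n y' / (min (a/b) (b/a)) := by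
  set q : ℝ := min (a/b) (b/a) with hq
  have hq0 : 0 < q := q_pos ha hb
  have hq1 : q ≤ 1 := q_le_one ha hb
  have hqa : q ≤ a / b := min_le_left _ _
  have hqb : q ≤ b / a := min_le_right _ _
  rw [DD_eq ha hb, DD_eq ha hb]
  set k := beta a b c n y with hk
  set k' := beta a b c n y' with hk'
  have hkn : k ≤ n := beta_le n y
  have hk'n : k' ≤ n := beta_le n y'
  have h1 : (k : ℤ) ≤ k' + 1 := beta_diff ha hb hc0 hc1 heq hy hy' n
  have h2 : (k' : ℤ) ≤ k + 1 := beta_diff ha hb hc0 hc1 heq hy' hy n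
  rcases lt_trichotomy k k' with h | h | h
  · have hkk : k' = k + 1 := by omega
    have hsub : n - k = (n - (k+1)) + 1 := by omega
    have key : 1/a ≤ (1/b) / q := by
      have hba : b * q ≤ a := by
        have h' := div_mul_cancel₀ a (ne_of_gt hb)
        nlinarith
      rw [div_div]
      exact one_div_le_one_div_of_le (by positivity) hba
    calc (1/b)^k * (1/a)^(n-k)
        = ((1/b)^k * (1/a)^(n-(k+1))) * (1/a) := by rw [hsub, pow_succ]; ring
      _ ≤ ((1/b)^k * (1/a)^(n-(k+1))) * ((1/b) / q) := by
          refine mul_le_mul_of_nonneg_left key (by positivity)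
      _ = (1/b)^(k+1) * (1/a)^(n-(k+1)) / q := by rw [pow_succ]; ring
      _ = (1/b)^k' * (1/a)^(n-k') / q := by rw [hkk]
  · rw [h, le_div_iff₀ hq0]
    exact mul_le_of_le_one_right (by positivity) hq1
  · have hkk : k = k' + 1 := by omega
    have hsub : n - k' = (n - (k'+1)) + 1 := by omega
    have key : 1/b ≤ (1/a) / q := by
      have hab : a * q ≤ b := by
        have h' := div_mul_cancel₀ b (ne_of_gt ha)
        nlinarith
      rw [div_div]
      exact one_div_le_one_div_of_le (by positivity) hab
    calc (1/b)^k * (1/a)^(n-k)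
        = ((1/b)^k' * (1/a)^(n-(k'+1))) * (1/b) := by rw [hkk, pow_succ]; ring
      _ ≤ ((1/b)^k' * (1/a)^(n-(k'+1))) * ((1/a) / q) := by
          refine mul_le_mul_of_nonneg_left key (by positivity)
      _ = (1/b)^k' * ((1/a)^(n-(k'+1)) * (1/a)) / q := by ring
      _ = (1/b)^k' * (1/a)^(n-k') / q := by rw [hsub, pow_succ]

lemma DD_lower (ha : 0 < a) (hb : 0 < b) (hc0 : 0 < c) (hc1 : c < 1)
    (heq : a * c + b * (1 - c) = 1) {y : ℝ} (hy : y ∈ Set.Ico (0:ℝ) 1) (n : ℕ) :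
    min (a/b) (b/a) ≤ DD a b c n y := by
  have hq0 : 0 < min (a/b) (b/a) := q_pos ha hb
  have h1 : (1 : ℝ≥0∞) ≤ ENNReal.ofReal (DD a b c n y / min (a/b) (b/a)) := by
    calc (1 : ℝ≥0∞) = ∫⁻ y' in Set.Ico (0:ℝ) 1, ENNReal.ofReal (DD a b c n y') :=
          (DD_normalized ha hb hc0 hc1 heq n).symm
      _ ≤ ∫⁻ _y' in Set.Ico (0:ℝ) 1,
            ENNReal.ofReal (DD a b c n y / min (a/b) (b/a)) := by
          refine setLIntegral_mono measurable_const fun y' hy' => ?_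
          exact ENNReal.ofReal_le_ofReal (DD_ratio ha hb hc0 hc1 heq hy' hy n)
      _ = ENNReal.ofReal (DD a b c n y / min (a/b) (b/a)) := by
          rw [setLIntegral_const, Real.volume_Ico]
          norm_num
  have h2 : (1 : ℝ) ≤ DD a b c n y / min (a/b) (b/a) := ENNReal.one_le_ofReal.1 h1
  rw [le_div_iff₀ hq0, one_mul] at h2
  linarith

lemma DD_upper (ha : 0 < a) (hb : 0 < b) (hc0 : 0 < c) (hc1 : c < 1)
    (heq : a * c + b * (1 - c) = 1) {y : ℝ} (hy : y ∈ Set.Ico (0:ℝ) 1) (n : ℕ) :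
    DD a b c n y ≤ 1 / min (a/b) (b/a) := by
  have hq0 : 0 < min (a/b) (b/a) := q_pos ha hb
  have h1 : ENNReal.ofReal (DD a b c n y) ≤ ENNReal.ofReal (1 / min (a/b) (b/a)) := by
    have hmeas : Measurable fun y' => ENNReal.ofReal (DD a b c n y' / min (a/b) (b/a)) :=
      ((DD_measurable n).div_const _).ennreal_ofReal
    calc ENNReal.ofReal (DD a b c n y)
        = ∫⁻ _y' in Set.Ico (0:ℝ) 1, ENNReal.ofReal (DD a b c n y) := by
          rw [setLIntegral_const, Real.volume_Ico]; norm_num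
      _ ≤ ∫⁻ y' in Set.Ico (0:ℝ) 1,
            ENNReal.ofReal (DD a b c n y' / min (a/b) (b/a)) := by
          refine setLIntegral_mono hmeas fun y' hy' => ?_
          exact ENNReal.ofReal_le_ofReal (DD_ratio ha hb hc0 hc1 heq hy hy' n)
      _ = ∫⁻ y' in Set.Ico (0:ℝ) 1,
            ENNReal.ofReal (DD a b c n y') * ENNReal.ofReal (1 / min (a/b) (b/a)) := by
          refine setLIntegral_congr_fun measurableSet_Ico (fun y' _ => ?_)
          rw [← ENNReal.ofReal_mul (DD_nonneg ha hb n y')]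
          congr 1
          field_simp
      _ = 1 * ENNReal.ofReal (1 / min (a/b) (b/a)) := by
          rw [lintegral_mul_const' _ _ ENNReal.ofReal_ne_top,
            DD_normalized ha hb hc0 hc1 heq n]
      _ = ENNReal.ofReal (1 / min (a/b) (b/a)) := one_mul _
  exact (ENNReal.ofReal_le_ofReal_iff (by positivity)).1 h1

lemma vol_Icc_inter (P : Set ℝ) :
    volume (Set.Icc (0:ℝ) 1 ∩ P) = volume (Set.Ico (0:ℝ) 1 ∩ P) := by
  apply le_antisymm
  · calc volume (Set.Icc (0:ℝ) 1 ∩ P)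
        ≤ volume ((Set.Ico (0:ℝ) 1 ∩ P) ∪ {1}) := by
          refine measure_mono fun x hx => ?_
          rcases eq_or_lt_of_le hx.1.2 with h | h
          · exact Or.inr (by simp [h])
          · exact Or.inl ⟨⟨hx.1.1, h⟩, hx.2⟩
      _ ≤ volume (Set.Ico (0:ℝ) 1 ∩ P) + volume ({1} : Set ℝ) := measure_union_le _ _
      _ = volume (Set.Ico (0:ℝ) 1 ∩ P) := by simp
  · exact measure_mono (Set.inter_subset_inter_left _ Set.Ico_subset_Icc_self)

lemma vol_A_inter {A : Set ℝ} (hA : A ⊆ Set.Icc 0 1) :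
    volume (A ∩ Set.Ico (0:ℝ) 1) = volume A := by
  apply le_antisymm
  · exact measure_mono Set.inter_subset_left
  · calc volume A ≤ volume ((A ∩ Set.Ico (0:ℝ) 1) ∪ {1}) := by
          refine measure_mono fun x hx => ?_
          rcases eq_or_lt_of_le (hA hx).2 with h | h
          · exact Or.inr (by simp [h])
          · exact Or.inl ⟨hx, (hA hx).1, h⟩
      _ ≤ volume (A ∩ Set.Ico (0:ℝ) 1) + volume ({1} : Set ℝ) := measure_union_le _ _
      _ = volume (A ∩ Set.Ico (0:ℝ) 1) := by simp

end Final
end LorenzAux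

/-- If `ac + b(1-c) = 1` and `log a / log b` is irrational, then with
`r = min ((a/b)^4) ((b/a)^4) > 0`, for all `n ≥ 1` and all Borel `A ⊆ [0,1]`,
`r·m(A) ≤ m(f^{-n}(A)) ≤ m(A)/r`. -/
theorem preimage_measure_comparable (a b c : ℝ)
    (ha : 0 < a) (hb : 0 < b) (hc : c ∈ Set.Ioo (0:ℝ) 1)
    (heq : a * c + b * (1 - c) = 1)
    (hirr : Irrational (Real.log a / Real.log b)) :
    ∃ r : ℝ, 0 < r ∧ r = min ((a / b) ^ 4) ((b / a) ^ 4) ∧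
      ∀ n : ℕ, 1 ≤ n → ∀ A : Set ℝ, A ⊆ Set.Icc 0 1 → MeasurableSet A →
        ENNReal.ofReal r * volume A
            ≤ volume (Set.Icc (0:ℝ) 1 ∩ (lorenz a b c)^[n] ⁻¹' A) ∧
          volume (Set.Icc (0:ℝ) 1 ∩ (lorenz a b c)^[n] ⁻¹' A)
            ≤ volume A / ENNReal.ofReal r := by
  open LorenzAux in
  obtain ⟨hc0, hc1⟩ := hc
  have hq0 : 0 < min (a/b) (b/a) := q_pos ha hb
  have hq1 : min (a/b) (b/a) ≤ 1 := q_le_one ha hb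
  set q : ℝ := min (a/b) (b/a) with hqdef
  have hr_eq : min ((a / b) ^ 4) ((b / a) ^ 4) = q ^ 4 := by
    rcases le_total (a/b) (b/a) with h | h
    · rw [hqdef, min_eq_left h,
        min_eq_left (pow_le_pow_left₀ (by positivity : (0:ℝ) ≤ a/b) h 4)]
    · rw [hqdef, min_eq_right h,
        min_eq_right (pow_le_pow_left₀ (by positivity : (0:ℝ) ≤ b/a) h 4)]
  refine ⟨min ((a / b) ^ 4) ((b / a) ^ 4), by positivity, rfl, ?_⟩
  intro n hn A hA hAm
  have hAm' : MeasurableSet (A ∩ Set.Ico (0:ℝ) 1) := hAm.inter measurableSet_Ico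
  have hAsub : A ∩ Set.Ico (0:ℝ) 1 ⊆ Set.Ico (0:ℝ) 1 := Set.inter_subset_right
  have hvol : volume (Set.Icc (0:ℝ) 1 ∩ (lorenz a b c)^[n] ⁻¹' A)
      = ∫⁻ y in A ∩ Set.Ico (0:ℝ) 1, ENNReal.ofReal (DD a b c n y) := by
    rw [vol_Icc_inter, pre_iter_eq ha hb hc0 hc1 heq]
    exact (claimA ha hb hc0 hc1 heq n _ hAm' hAsub).2
  have hrq : min ((a / b) ^ 4) ((b / a) ^ 4) ≤ q := by
    rw [hr_eq]
    exact pow_le_of_le_one hq0.le hq1 (by norm_num)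
  have hr0 : (0:ℝ) < min ((a / b) ^ 4) ((b / a) ^ 4) := by positivity
  constructor
  · calc ENNReal.ofReal (min ((a / b) ^ 4) ((b / a) ^ 4)) * volume A
        = ENNReal.ofReal (min ((a / b) ^ 4) ((b / a) ^ 4)) * volume (A ∩ Set.Ico (0:ℝ) 1) := by
          rw [vol_A_inter hA]
      _ ≤ ENNReal.ofReal q * volume (A ∩ Set.Ico (0:ℝ) 1) :=
          mul_le_mul_left (ENNReal.ofReal_le_ofReal hrq) _
      _ = ∫⁻ _y in A ∩ Set.Ico (0:ℝ) 1, ENNReal.ofReal q := (setLIntegral_const _ _).symm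
      _ ≤ ∫⁻ y in A ∩ Set.Ico (0:ℝ) 1, ENNReal.ofReal (DD a b c n y) := by
          refine setLIntegral_mono (DD_measurable n).ennreal_ofReal fun y hy => ?_
          exact ENNReal.ofReal_le_ofReal (DD_lower ha hb hc0 hc1 heq (hAsub hy) n)
      _ = volume (Set.Icc (0:ℝ) 1 ∩ (lorenz a b c)^[n] ⁻¹' A) := hvol.symm
  · rw [ENNReal.le_div_iff_mul_le (Or.inl (ENNReal.ofReal_pos.2 hr0).ne')
      (Or.inl ENNReal.ofReal_ne_top)]
    calc volume (Set.Icc (0:ℝ) 1 ∩ (lorenz a b c)^[n] ⁻¹' A)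
          * ENNReal.ofReal (min ((a / b) ^ 4) ((b / a) ^ 4))
        ≤ (∫⁻ _y in A ∩ Set.Ico (0:ℝ) 1, ENNReal.ofReal (1/q))
          * ENNReal.ofReal (min ((a / b) ^ 4) ((b / a) ^ 4)) := by
          refine mul_le_mul_left ?_ _
          rw [hvol]
          refine setLIntegral_mono measurable_const fun y hy => ?_
          exact ENNReal.ofReal_le_ofReal (DD_upper ha hb hc0 hc1 heq (hAsub hy) n)
      _ = ENNReal.ofReal ((1/q) * min ((a / b) ^ 4) ((b / a) ^ 4))
          * volume (A ∩ Set.Ico (0:ℝ) 1) := by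
          rw [setLIntegral_const, ENNReal.ofReal_mul (by positivity)]
          ring
      _ ≤ 1 * volume (A ∩ Set.Ico (0:ℝ) 1) := by
          refine mul_le_mul_left (ENNReal.ofReal_le_one.2 ?_) _
          rw [hr_eq]
          have : (1/q) * q ^ 4 = q ^ 3 := by field_simp
          rw [this]
          exact pow_le_one₀ hq0.le hq1
      _ = volume A := by rw [one_mul, vol_A_inter hA]
end

section
/- Let f_{a,b,c} be a piecewise linear Lorenz map with ac + b(1-c) > 1, κ = 2, A = f(0) = 1 - ac, B = f(1) = b(1-c), and M = min{(c-A)/(B-c), (B-c)/(c-A)}. Then [A,B] ⊆ [P_L, P_R] with P_L = (abc+bc-b)/(ab-1), P_R = (abc+ac-1)/(ab-1) if and only if ab ≤ 1 + M and ab ≤ 1 + 1/M, i.e. ab ≤ 1 + M (since M ≤ 1). -/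
/-- With `κ = 2`, `A = f(0) = 1 - ac`, `B = f(1) = b(1-c)`,
`A < c < B`, `ab > 1`, `M = min ((c-A)/(B-c), (B-c)/(c-A))`, one has
`[A,B] ⊆ [P_L,P_R]` if and only if `ab ≤ 1 + M`. -/
theorem renormalization_interval_containment_iff (a b c A B M PL PR : ℝ)
    (ha : 0 < a) (hb : 0 < b) (hc : c ∈ Set.Ioo (0:ℝ) 1)
    (hgt : 1 < a * c + b * (1 - c))
    (hA : A = 1 - a * c) (hB : B = b * (1 - c))
    (hAc : A < c) (hcB : c < B) (hab : 1 < a * b)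
    (hM : M = min ((c - A) / (B - c)) ((B - c) / (c - A)))
    (hPL : PL = (a * b * c + b * c - b) / (a * b - 1))
    (hPR : PR = (a * b * c + a * c - 1) / (a * b - 1)) :
    Set.Icc A B ⊆ Set.Icc PL PR ↔ a * b ≤ 1 + M := by
  have hAB : A ≤ B := le_of_lt (hAc.trans hcB)
  have h1 : 0 < c - A := by linarith
  have h2 : 0 < B - c := by linarith
  have hd : 0 < a * b - 1 := by linarith
  have key1 : PL ≤ A ↔ (a * b - 1) * (c - A) ≤ B - c := by
    rw [hPL, div_le_iff₀ hd]
    constructor <;> intro h <;> nlinarith [hA, hB]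
  have key2 : B ≤ PR ↔ (a * b - 1) * (B - c) ≤ c - A := by
    rw [hPR, le_div_iff₀ hd]
    constructor <;> intro h <;> nlinarith [hA, hB]
  have keyM : a * b ≤ 1 + M ↔
      ((a * b - 1) * (c - A) ≤ B - c ∧ (a * b - 1) * (B - c) ≤ c - A) := by
    rw [hM]
    constructor
    · intro h
      have h3 := le_min_iff.mp (by linarith : a * b - 1 ≤ min ((c - A) / (B - c)) ((B - c) / (c - A)))
      constructor
      · rw [le_div_iff₀ h1] at h3
        nlinarith [h3.2]
      · rw [le_div_iff₀ h2] at h3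
        nlinarith [h3.1]
    · rintro ⟨u, v⟩
      have : a * b - 1 ≤ min ((c - A) / (B - c)) ((B - c) / (c - A)) := by
        refine le_min ?_ ?_
        · rw [le_div_iff₀ h2]; nlinarith
        · rw [le_div_iff₀ h1]; nlinarith
      linarith
  constructor
  · intro h
    have hPLA : PL ≤ A := (h ⟨le_refl A, hAB⟩).1
    have hBPR : B ≤ PR := (h ⟨hAB, le_refl B⟩).2
    exact keyM.mpr ⟨key1.mp hPLA, key2.mp hBPR⟩
  · intro h
    obtain ⟨u, v⟩ := keyM.mp h
    exact Set.Icc_subset_Icc (key1.mpr u) (key2.mpr v)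
end

section
/- Let β > 1 and α = 1/(β^{k-1}(β-1)) for some integer k ≥ 1, and let S(x) = βx for x ∈ [0, 1/β) and S(x) = α(x - 1/β) for x ∈ (1/β, 1]. Then the function g(x) = (1/(β-1)) 1_{[0,1]}(x) + Σ_{i=1}^k β^{i-1} 1_{[0, β^{-i}]}(x) satisfies P g = g, where P is the Perron–Frobenius (transfer) operator of S with respect to Lebesgue measure; equivalently, the measure with density g (normalized) is S-invariant. -/
open MeasureTheory

-- helper: integral of c * indicator over a set
lemma mid_indicator_integral (c r : ℝ) (E : Set ℝ) :
    ∫ x in E, c * Set.indicator (Set.Icc (0:ℝ) r) (fun _ => (1:ℝ)) x =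
      c * (volume (E ∩ Set.Icc (0:ℝ) r)).toReal := by
  have h : (fun x => c * Set.indicator (Set.Icc (0:ℝ) r) (fun _ => (1:ℝ)) x)
      = Set.indicator (Set.Icc (0:ℝ) r) (fun _ => c) := by
    funext x
    by_cases hx : x ∈ Set.Icc (0:ℝ) r <;> simp [Set.indicator_apply, hx]
  rw [h, MeasureTheory.setIntegral_indicator measurableSet_Icc, setIntegral_const]
  rw [smul_eq_mul, mul_comm]
  rfl

lemma mid_integrable (c r : ℝ) (E : Set ℝ) :
    IntegrableOn (fun x => c * Set.indicator (Set.Icc (0:ℝ) r) (fun _ => (1:ℝ)) x) E volume := by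
  have h : (fun x => c * Set.indicator (Set.Icc (0:ℝ) r) (fun _ => (1:ℝ)) x)
      = Set.indicator (Set.Icc (0:ℝ) r) (fun _ => c) := by
    funext x
    by_cases hx : x ∈ Set.Icc (0:ℝ) r <;> simp [Set.indicator_apply, hx]
  rw [h]
  exact ((integrable_indicator_iff measurableSet_Icc).2
    (integrableOn_const measure_Icc_lt_top.ne)).integrableOn

lemma mid_g_integral (β : ℝ) (k : ℕ) (E : Set ℝ) :
    ∫ x in E, ((1 / (β - 1)) * Set.indicator (Set.Icc (0:ℝ) 1) (fun _ => (1:ℝ)) x +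
        ∑ i ∈ Finset.range k,
          β ^ i * Set.indicator (Set.Icc (0:ℝ) ((β ^ (i + 1))⁻¹)) (fun _ => (1:ℝ)) x)
      = (1 / (β - 1)) * (volume (E ∩ Set.Icc (0:ℝ) 1)).toReal +
        ∑ i ∈ Finset.range k,
          β ^ i * (volume (E ∩ Set.Icc (0:ℝ) ((β ^ (i + 1))⁻¹))).toReal := by
  rw [integral_add (mid_integrable _ _ _)
      (integrable_finset_sum _ (fun i _ => mid_integrable _ _ _)),
    integral_finset_sum _ (fun i _ => mid_integrable _ _ _), mid_indicator_integral]
  congr 1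
  exact Finset.sum_congr rfl fun i _ => mid_indicator_integral _ _ _

lemma mid_vol_eq {s t : Set ℝ} (p : ℝ) (h1 : s ⊆ t) (h2 : t ⊆ s ∪ {p}) :
    volume s = volume t :=
  le_antisymm (measure_mono h1) ((measure_mono h2).trans
    ((measure_union_le _ _).trans (by simp)))
/-- Let `β > 1`, `α = 1/(β^(k-1)(β-1))` with `k ≥ 1`, and let
`S(x) = βx` on `[0,1/β)`, `S(x) = α(x - 1/β)` on `(1/β,1]`. Then the function
`g = (1/(β-1))·1_{[0,1]} + Σ_{i=1}^k β^(i-1)·1_{[0,β^{-i}]}` is a fixed point of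
the Perron–Frobenius operator of `S`; equivalently, the measure with density `g`
is `S`-invariant. -/
theorem markov_invariant_density (β α : ℝ) (k : ℕ)
    (hβ : 1 < β) (hk : 1 ≤ k)
    (hα : α = 1 / (β ^ (k - 1) * (β - 1))) :
    let S : ℝ → ℝ := fun x => if x < 1 / β then β * x else α * (x - 1 / β)
    let g : ℝ → ℝ := fun x =>
      (1 / (β - 1)) * Set.indicator (Set.Icc (0:ℝ) 1) (fun _ => (1:ℝ)) x +
        ∑ i ∈ Finset.range k,
          β ^ i * Set.indicator (Set.Icc (0:ℝ) ((β ^ (i + 1))⁻¹)) (fun _ => (1:ℝ)) x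
    ∀ A : Set ℝ, MeasurableSet A → A ⊆ Set.Icc (0:ℝ) 1 →
      ∫ x in S ⁻¹' A ∩ Set.Icc (0:ℝ) 1, g x = ∫ x in A, g x := by
  intro S g A hA hAsub
  obtain ⟨m, rfl⟩ : ∃ m, k = m + 1 := ⟨k - 1, (Nat.succ_pred_eq_of_pos hk).symm⟩
  have hβ0 : (0:ℝ) < β := lt_trans one_pos hβ
  have hβne : β ≠ 0 := ne_of_gt hβ0
  have hβ1 : (0:ℝ) < β - 1 := by linarith
  have hαval : α = 1 / (β ^ m * (β - 1)) := by simpa using hα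
  have hα0 : 0 < α := by rw [hαval]; positivity
  have hαne : α ≠ 0 := ne_of_gt hα0
  have hβinv1 : 1 / β ≤ 1 := by rw [div_le_one hβ0]; linarith
  have hβinv0 : 0 < 1 / β := by positivity
  have hkey : α * (1 - 1 / β) = (β ^ (m + 1))⁻¹ := by
    rw [hαval]; field_simp; ring
  have hpow : ∀ i : ℕ, β * (β ^ (i + 1))⁻¹ = (β ^ i)⁻¹ := by
    intro i; rw [pow_succ]; field_simp
  have hpowle : ∀ i : ℕ, ((β ^ (i + 1))⁻¹ : ℝ) ≤ 1 / β := by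
    intro i
    rw [one_div]
    have h1 : β ≤ β ^ (i + 1) := by
      calc β = β ^ 1 := (pow_one β).symm
        _ ≤ β ^ (i + 1) := pow_le_pow_right₀ (le_of_lt hβ) (by omega)
    exact inv_anti₀ hβ0 h1
  set B₁ : Set ℝ := (fun x => β * x) ⁻¹' A ∩ Set.Iio (1 / β) with hB₁def
  set B₂ : Set ℝ :=
    (fun x => α * (x - 1 / β)) ⁻¹' (A ∩ Set.Icc 0 ((β ^ (m + 1))⁻¹)) with hB₂def
  have hB₂sub : B₂ ⊆ Set.Icc (1 / β) 1 := by
    intro x hx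
    obtain ⟨-, hx0, hx1⟩ := hx
    constructor
    · by_contra h
      push_neg at h
      nlinarith [mul_pos hα0 (show (0:ℝ) < 1 / β - x by linarith)]
    · have h2 : α * (x - 1 / β) ≤ α * (1 - 1 / β) := by rw [hkey]; exact hx1
      have := le_of_mul_le_mul_left h2 hα0
      linarith
  have hmB₁ : MeasurableSet B₁ :=
    ((measurable_const_mul β) hA).inter measurableSet_Iio
  have hmB₂ : MeasurableSet B₂ :=
    ((measurable_id.sub_const (1 / β)).const_mul α) (hA.inter measurableSet_Icc)
  have hdisj : Disjoint B₁ B₂ := by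
    rw [Set.disjoint_left]
    intro x hx₁ hx₂
    exact absurd hx₁.2 (not_lt.mpr (hB₂sub hx₂).1)
  have hEdecomp : S ⁻¹' A ∩ Set.Icc 0 1 = B₁ ∪ B₂ := by
    ext x
    simp only [Set.mem_inter_iff, Set.mem_preimage, Set.mem_union, Set.mem_Icc, Set.mem_Iio,
      hB₁def, hB₂def, S]
    by_cases hx : x < 1 / β
    · rw [if_pos hx]
      constructor
      · rintro ⟨hxa, -, -⟩; exact Or.inl ⟨hxa, hx⟩
      · rintro (⟨hxa, -⟩ | ⟨hxa, hx0, hx1⟩)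
        · have h0 : 0 ≤ β * x := (hAsub hxa).1
          exact ⟨hxa, by nlinarith, by nlinarith⟩
        · exfalso; nlinarith [mul_pos hα0 (show (0:ℝ) < 1 / β - x by linarith)]
    · push_neg at hx
      rw [if_neg (not_lt.mpr hx)]
      constructor
      · rintro ⟨hxa, -, hx1⟩
        refine Or.inr ⟨hxa, by nlinarith, ?_⟩
        rw [← hkey]
        nlinarith
      · rintro (⟨-, hlt⟩ | hxB)
        · exact absurd hlt (not_lt.mpr hx)
        · have := hB₂sub hxB
          exact ⟨hxB.1, le_trans (le_of_lt hβinv0) this.1, this.2⟩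
  have hAfin : volume A ≠ ⊤ :=
    ((measure_mono hAsub).trans_lt measure_Icc_lt_top).ne
  have hfin : ∀ s : Set ℝ, volume (A ∩ s) ≠ ⊤ := fun s =>
    ((measure_mono Set.inter_subset_left).trans_lt hAfin.lt_top).ne
  have key1 : ∀ i : ℕ, volume (B₁ ∩ Set.Icc 0 ((β ^ (i + 1))⁻¹)) =
      ENNReal.ofReal β⁻¹ * volume (A ∩ Set.Icc 0 ((β ^ i)⁻¹)) := by
    intro i
    have hsub : B₁ ∩ Set.Icc 0 ((β ^ (i + 1))⁻¹) ⊆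
        (fun x => β * x) ⁻¹' (A ∩ Set.Icc 0 ((β ^ i)⁻¹)) := by
      rintro x ⟨⟨hxa, -⟩, -, hx2⟩
      refine ⟨hxa, (hAsub hxa).1, ?_⟩
      rw [← hpow i]; nlinarith
    have hsup : (fun x => β * x) ⁻¹' (A ∩ Set.Icc 0 ((β ^ i)⁻¹)) ⊆
        (B₁ ∩ Set.Icc 0 ((β ^ (i + 1))⁻¹)) ∪ {1 / β} := by
      rintro x ⟨hxa, hx0, hx1⟩
      dsimp only at hxa hx0 hx1
      have hxc : x ≤ (β ^ (i + 1))⁻¹ := by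
        rw [← hpow i] at hx1; nlinarith
      rcases lt_or_eq_of_le (hxc.trans (hpowle i)) with h | h
      · exact Or.inl ⟨⟨hxa, h⟩, by nlinarith, hxc⟩
      · exact Or.inr h
    rw [mid_vol_eq (1 / β) hsub hsup, Real.volume_preimage_mul_left hβne,
      abs_of_pos (by positivity : (0:ℝ) < β⁻¹)]
  have key1top : volume (B₁ ∩ Set.Icc 0 1) = ENNReal.ofReal β⁻¹ * volume A := by
    have hsub : B₁ ∩ Set.Icc 0 1 ⊆ (fun x => β * x) ⁻¹' A := fun x hx => hx.1.1
    have hsup : (fun x => β * x) ⁻¹' A ⊆ (B₁ ∩ Set.Icc 0 1) ∪ {1 / β} := by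
      intro x hxa
      have h0 : 0 ≤ β * x := (hAsub hxa).1
      have h1 : β * x ≤ 1 := (hAsub hxa).2
      have hxle : x ≤ 1 / β := by rw [le_div_iff₀ hβ0]; linarith
      rcases lt_or_eq_of_le hxle with h | h
      · exact Or.inl ⟨⟨hxa, h⟩, by nlinarith, by linarith [hβinv1]⟩
      · exact Or.inr h
    rw [mid_vol_eq (1 / β) hsub hsup, Real.volume_preimage_mul_left hβne,
      abs_of_pos (by positivity : (0:ℝ) < β⁻¹)]
  have key2top : volume (B₂ ∩ Set.Icc 0 1) =
      ENNReal.ofReal α⁻¹ * volume (A ∩ Set.Icc 0 ((β ^ (m + 1))⁻¹)) := by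
    have hB2eq : B₂ ∩ Set.Icc 0 1 = B₂ :=
      Set.inter_eq_self_of_subset_left
        (hB₂sub.trans (Set.Icc_subset_Icc (le_of_lt hβinv0) le_rfl))
    rw [hB2eq]
    have hcomp : (fun x : ℝ => α * (x - 1 / β)) =
        (fun y => α * y) ∘ (fun x => -(1 / β) + x) := by
      funext x; simp only [Function.comp_apply]; ring
    rw [hB₂def, hcomp, Set.preimage_comp,
      measure_preimage_add volume (-(1 / β)) _,
      Real.volume_preimage_mul_left hαne,
      abs_of_pos (by positivity : (0:ℝ) < α⁻¹)]
  have key2i : ∀ i : ℕ, volume (B₂ ∩ Set.Icc 0 ((β ^ (i + 1))⁻¹)) = 0 := by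
    intro i
    have hsub : B₂ ∩ Set.Icc 0 ((β ^ (i + 1))⁻¹) ⊆ {1 / β} := by
      rintro x ⟨hxB, -, hx2⟩
      have h1 := (hB₂sub hxB).1
      have h2 := hpowle i
      have : x = 1 / β := le_antisymm (hx2.trans h2) h1
      simpa [Set.mem_singleton_iff] using this
    exact measure_mono_null hsub Real.volume_singleton
  have hvolE : ∀ J : Set ℝ, MeasurableSet J →
      volume ((B₁ ∪ B₂) ∩ J) = volume (B₁ ∩ J) + volume (B₂ ∩ J) := by
    intro J hJ
    rw [Set.union_inter_distrib_right]
    exact measure_union (hdisj.mono Set.inter_subset_left Set.inter_subset_left)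
      (hmB₂.inter hJ)
  simp only [g]
  rw [hEdecomp, mid_g_integral, mid_g_integral]
  have h1 : volume ((B₁ ∪ B₂) ∩ Set.Icc 0 1) =
      ENNReal.ofReal β⁻¹ * volume A +
        ENNReal.ofReal α⁻¹ * volume (A ∩ Set.Icc 0 ((β ^ (m + 1))⁻¹)) := by
    rw [hvolE _ measurableSet_Icc, key1top, key2top]
  have h2 : ∀ i : ℕ, volume ((B₁ ∪ B₂) ∩ Set.Icc 0 ((β ^ (i + 1))⁻¹)) =
      ENNReal.ofReal β⁻¹ * volume (A ∩ Set.Icc 0 ((β ^ i)⁻¹)) := by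
    intro i
    rw [hvolE _ measurableSet_Icc, key1 i, key2i i, add_zero]
  rw [h1]
  simp only [h2]
  rw [ENNReal.toReal_add (ENNReal.mul_ne_top ENNReal.ofReal_ne_top hAfin)
      (ENNReal.mul_ne_top ENNReal.ofReal_ne_top (hfin _))]
  simp only [ENNReal.toReal_mul]
  rw [ENNReal.toReal_ofReal (by positivity : (0:ℝ) ≤ β⁻¹),
    ENNReal.toReal_ofReal (by positivity : (0:ℝ) ≤ α⁻¹)]
  rw [Finset.sum_range_succ' _ m, Finset.sum_range_succ]
  simp only [pow_zero, inv_one, one_mul]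
  rw [Set.inter_eq_self_of_subset_left hAsub]
  simp only [← mul_assoc, pow_succ, mul_inv_cancel_right₀ hβne]
  have hαinv : α⁻¹ = β ^ m * (β - 1) := by
    rw [hαval]; field_simp
  rw [hαinv]
  field_simp
  ring
end

section
/- Let n ≥ 2 be an integer and let f = f_{1,n,1-1/n}, i.e. f(x) = x + 1/n for x ∈ [0, 1-1/n) and f(x) = n(x - (1-1/n)) for x ∈ (1-1/n, 1]. Then g_n(x) = (2/(n+1)) Σ_{i=0}^{n-1} 1_{[i/n, 1]}(x) is an invariant probability density for f: P g_n = g_n and ∫_0^1 g_n dm = 1, where P is the Perron–Frobenius operator of f. -/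
open MeasureTheory

noncomputable def gfun (n : ℕ) : ℝ → ℝ := fun x =>
  (2 / ((n : ℝ) + 1)) * ∑ i ∈ Finset.range n,
    Set.indicator (Set.Icc ((i : ℝ) / (n : ℝ)) 1) (fun _ => (1:ℝ)) x

lemma gfun_integrable (n : ℕ) : Integrable (gfun n) := by
  apply Integrable.const_mul
  apply integrable_finset_sum
  intro i _
  rw [integrable_indicator_iff measurableSet_Icc]
  exact integrableOn_const measure_Icc_lt_top.ne

lemma gfun_eq (n : ℕ) (x : ℝ) :
    gfun n x = (2 / ((n : ℝ) + 1)) * ∑ i ∈ Finset.range n,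
      (if (i : ℝ) / (n : ℝ) ≤ x ∧ x ≤ 1 then (1:ℝ) else 0) := by
  simp [gfun, Set.indicator_apply, Set.mem_Icc]

lemma gfun_high (n : ℕ) (hn : 2 ≤ n) {x : ℝ} (hx : x ∈ Set.Icc (1 - 1/(n:ℝ)) 1) :
    gfun n x = 2 * n / ((n:ℝ) + 1) := by
  have hN : (2:ℝ) ≤ (n:ℝ) := by exact_mod_cast hn
  have hN0 : (0:ℝ) < n := by linarith
  have hterm : ∀ i ∈ Finset.range n,
      (if (i:ℝ)/(n:ℝ) ≤ x ∧ x ≤ 1 then (1:ℝ) else 0) = 1 := by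
    intro i hi
    rw [if_pos]
    refine ⟨?_, hx.2⟩
    have h1 : ((i:ℝ)+1)/(n:ℝ) ≤ 1 := by
      rw [div_le_one hN0]
      exact_mod_cast Finset.mem_range.1 hi
    rw [add_div] at h1
    have := hx.1
    linarith
  rw [gfun_eq, Finset.sum_congr rfl hterm, Finset.sum_const, Finset.card_range,
    nsmul_eq_mul, mul_one]
  ring

lemma gfun_low (n : ℕ) (hn : 2 ≤ n) {x : ℝ} (hx : x ∈ Set.Ico 0 (1/(n:ℝ))) :
    gfun n x = 2 / ((n:ℝ) + 1) := by
  have hN : (2:ℝ) ≤ (n:ℝ) := by exact_mod_cast hn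
  have hN0 : (0:ℝ) < n := by linarith
  have hx1 : x ≤ 1 := by
    have : 1/(n:ℝ) ≤ 1 := by rw [div_le_one hN0]; linarith
    linarith [hx.2]
  rw [gfun_eq, Finset.sum_eq_single_of_mem 0 (Finset.mem_range.2 (by omega))]
  · rw [if_pos ⟨by simpa using hx.1, hx1⟩, mul_one]
  · intro i _ hi0
    rw [if_neg]
    rintro ⟨h1, -⟩
    have hi1 : (1:ℝ) ≤ (i:ℝ) := by exact_mod_cast Nat.one_le_iff_ne_zero.2 hi0
    have : 1/(n:ℝ) ≤ (i:ℝ)/(n:ℝ) := by gcongr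
    linarith [hx.2]

lemma gfun_shift (n : ℕ) (hn : 2 ≤ n) {y : ℝ} (hy : y ∈ Set.Ico (1/(n:ℝ)) 1) :
    gfun n (y - 1/(n:ℝ)) = gfun n y - 2/((n:ℝ)+1) := by
  have hN : (2:ℝ) ≤ (n:ℝ) := by exact_mod_cast hn
  have hN0 : (0:ℝ) < n := by linarith
  set h : ℕ → ℝ := fun j => if (j:ℝ)/(n:ℝ) ≤ y then (1:ℝ) else 0 with hh
  have hupper : y - 1/(n:ℝ) ≤ 1 := by
    have : 0 < 1/(n:ℝ) := by positivity
    linarith [hy.2]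
  have e1 : ∀ i ∈ Finset.range n,
      (if (i:ℝ)/(n:ℝ) ≤ y - 1/(n:ℝ) ∧ y - 1/(n:ℝ) ≤ 1 then (1:ℝ) else 0) = h (i+1) := by
    intro i _
    have : ((i:ℝ)/(n:ℝ) ≤ y - 1/(n:ℝ) ∧ y - 1/(n:ℝ) ≤ 1) ↔ ((i:ℝ)+1)/(n:ℝ) ≤ y := by
      constructor
      · rintro ⟨h1, -⟩; rw [add_div]; linarith
      · intro h1; rw [add_div] at h1; exact ⟨by linarith, hupper⟩
    simp only [hh]
    rw [if_congr this rfl rfl]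
    push_cast
    rfl
  have e2 : ∀ i ∈ Finset.range n,
      (if (i:ℝ)/(n:ℝ) ≤ y ∧ y ≤ 1 then (1:ℝ) else 0) = h i := by
    intro i _
    simp only [hh]
    rw [if_congr (and_iff_left hy.2.le) rfl rfl]
  have h0 : h 0 = 1 := by
    simp only [hh, Nat.cast_zero, zero_div]
    rw [if_pos (le_trans (by positivity) hy.1)]
  have hn' : h n = 0 := by
    simp only [hh]
    rw [if_neg]
    rw [div_self hN0.ne']
    linarith [hy.2]
  have key : ∑ i ∈ Finset.range n, h (i+1) = (∑ i ∈ Finset.range n, h i) - 1 := by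
    have := Finset.sum_range_succ' h n
    have h2 := Finset.sum_range_succ h n
    rw [h2] at this
    rw [hn', h0] at this
    linarith
  rw [gfun_eq, gfun_eq, Finset.sum_congr rfl e1, Finset.sum_congr rfl e2, key]
  ring

lemma gfun_total (n : ℕ) (hn : 2 ≤ n) : ∫ x in Set.Icc (0:ℝ) 1, gfun n x = 1 := by
  have hN : (2:ℝ) ≤ (n:ℝ) := by exact_mod_cast hn
  have hN0 : (0:ℝ) < n := by linarith
  have hint : ∀ i : ℕ, IntegrableOn
      (Set.indicator (Set.Icc ((i:ℝ)/(n:ℝ)) 1) (fun _ => (1:ℝ))) (Set.Icc (0:ℝ) 1) := fun i =>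
    ((integrable_indicator_iff measurableSet_Icc).2
      (integrableOn_const measure_Icc_lt_top.ne)).integrableOn
  have e : ∀ i ∈ Finset.range n,
      ∫ x in Set.Icc (0:ℝ) 1, Set.indicator (Set.Icc ((i:ℝ)/(n:ℝ)) 1) (fun _ => (1:ℝ)) x
        = 1 - (i:ℝ)/(n:ℝ) := by
    intro i hi
    have hilt : (i:ℝ) < (n:ℝ) := by exact_mod_cast Finset.mem_range.1 hi
    have hi' : (i:ℝ)/(n:ℝ) ≤ 1 := by rw [div_le_one hN0]; linarith
    have hi0 : 0 ≤ (i:ℝ)/(n:ℝ) := by positivity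
    rw [setIntegral_indicator measurableSet_Icc, Set.Icc_inter_Icc, setIntegral_const]
    simp [Real.volume_Icc, max_eq_right hi0, min_self, hi',
      ENNReal.toReal_ofReal (by linarith : (0:ℝ) ≤ 1 - (i:ℝ)/(n:ℝ))]
  have hsum : ∑ i ∈ Finset.range n, (1 - (i:ℝ)/(n:ℝ)) = ((n:ℝ)+1)/2 := by
    have hgauss : ((∑ i ∈ Finset.range n, i : ℕ) : ℝ) * 2 = (n:ℝ) * ((n:ℝ) - 1) := by
      have h2 := Finset.sum_range_id_mul_two n
      have h3 : (((∑ i ∈ Finset.range n, i) * 2 : ℕ) : ℝ) = ((n * (n-1) : ℕ) : ℝ) :=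
        congrArg (fun k : ℕ => (k:ℝ)) h2
      push_cast [Nat.cast_sub (by omega : 1 ≤ n)] at h3
      push_cast
      linarith
    rw [Finset.sum_sub_distrib, Finset.sum_const, Finset.card_range, ← Finset.sum_div]
    push_cast at hgauss ⊢
    rw [nsmul_eq_mul, mul_one]
    field_simp
    linarith
  unfold gfun
  rw [integral_const_mul, integral_finset_sum _ (fun i _ => hint i),
    Finset.sum_congr rfl e, hsum]
  field_simp

/-- For an integer `n ≥ 2` and `f = f_{1,n,1-1/n}`, the function
`g_n = (2/(n+1)) Σ_{i=0}^{n-1} 1_{[i/n,1]}` is an invariant probability density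
for `f`: the measure with density `g_n` is `f`-invariant and `∫ g_n = 1`. -/
theorem markov_invariant_density_two (n : ℕ) (hn : 2 ≤ n) :
    let f : ℝ → ℝ := lorenz 1 (n : ℝ) (1 - 1 / (n : ℝ))
    let g : ℝ → ℝ := fun x =>
      (2 / ((n : ℝ) + 1)) * ∑ i ∈ Finset.range n,
        Set.indicator (Set.Icc ((i : ℝ) / (n : ℝ)) 1) (fun _ => (1:ℝ)) x
    (∀ A : Set ℝ, MeasurableSet A → A ⊆ Set.Icc (0:ℝ) 1 →
        ∫ x in f ⁻¹' A ∩ Set.Icc (0:ℝ) 1, g x = ∫ x in A, g x) ∧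
      ∫ x in Set.Icc (0:ℝ) 1, g x = 1 := by
  intro f g
  have hg : g = gfun n := rfl
  have hN : (2:ℝ) ≤ (n:ℝ) := by exact_mod_cast hn
  have hN0 : (0:ℝ) < n := by linarith
  have hinv : (0:ℝ) < 1/(n:ℝ) := by positivity
  obtain ⟨c, hcdef⟩ : ∃ c : ℝ, c = 1 - 1/(n:ℝ) := ⟨_, rfl⟩
  have hc1 : c + 1/(n:ℝ) = 1 := by rw [hcdef]; ring
  have hc0 : 0 ≤ c := by
    rw [hcdef]
    have h : 1/(n:ℝ) ≤ 1 := by rw [div_le_one hN0]; linarith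
    linarith
  have hgi := gfun_integrable n
  constructor
  · intro A hA hA01
    set B := A ∩ Set.Ico (1/(n:ℝ)) 1 with hBdef
    have hB : MeasurableSet B := hA.inter measurableSet_Ico
    set S1 := (fun x : ℝ => x + 1/(n:ℝ)) ⁻¹' B with hS1def
    set S2 := (fun x : ℝ => (n:ℝ) * (x - c)) ⁻¹' A with hS2def
    have hS1 : MeasurableSet S1 := hB.preimage (measurable_id.add_const _)
    have hS2 : MeasurableSet S2 := hA.preimage ((measurable_id.sub_const c).const_mul _)
    have hS1sub : ∀ x ∈ S1, x < c := by
      intro x hx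
      simp only [hS1def, Set.mem_preimage, hBdef, Set.mem_inter_iff, Set.mem_Ico] at hx
      linarith [hx.2.2]
    have hS2sub : S2 ⊆ Set.Icc c 1 := by
      intro x hx
      simp only [hS2def, Set.mem_preimage] at hx
      have h01 := hA01 hx
      simp only [Set.mem_Icc] at h01
      constructor
      · by_contra h
        push_neg at h
        have : (n:ℝ) * (x - c) < 0 := mul_neg_of_pos_of_neg hN0 (by linarith)
        linarith [h01.1]
      · by_contra h
        push_neg at h
        have h2 : 1/(n:ℝ) < x - c := by linarith [hc1]
        have : (n:ℝ) * (1/(n:ℝ)) < (n:ℝ) * (x - c) := (mul_lt_mul_iff_right₀ hN0).2 h2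
        have h3 : (n:ℝ) * (1/(n:ℝ)) = 1 := by field_simp
        linarith [h01.2]
    have hflt : ∀ x : ℝ, x < c → f x = x + 1/(n:ℝ) := by
      intro x hx
      rw [hcdef] at hx
      show (if x < 1 - 1/(n:ℝ) then 1*x + 1 - 1*(1 - 1/(n:ℝ))
        else (n:ℝ)*(x-(1 - 1/(n:ℝ)))) = x + 1/(n:ℝ)
      rw [if_pos hx]; ring
    have hfge : ∀ x : ℝ, ¬ x < c → f x = (n:ℝ)*(x-c) := by
      intro x hx
      rw [hcdef] at hx ⊢
      show (if x < 1 - 1/(n:ℝ) then 1*x + 1 - 1*(1 - 1/(n:ℝ))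
        else (n:ℝ)*(x-(1 - 1/(n:ℝ)))) = (n:ℝ)*(x-(1 - 1/(n:ℝ)))
      rw [if_neg hx]
    have hsplit : f ⁻¹' A ∩ Set.Icc 0 1 = S1 ∪ S2 := by
      ext x
      simp only [Set.mem_inter_iff, Set.mem_preimage, Set.mem_Icc, Set.mem_union,
        hS1def, hS2def, hBdef, Set.mem_Ico]
      constructor
      · rintro ⟨hfx, hx0, hx1⟩
        by_cases hxc : x < c
        · left
          rw [hflt x hxc] at hfx
          exact ⟨hfx, by linarith, by linarith⟩
        · right
          rwa [hfge x hxc] at hfx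
      · rintro (⟨hxA, hx2, hx3⟩ | hx)
        · have hxc : x < c := by linarith
          refine ⟨?_, by linarith, by linarith⟩
          rw [hflt x hxc]
          exact hxA
        · have hxc : x ∈ Set.Icc c 1 := hS2sub hx
          simp only [Set.mem_Icc] at hxc
          refine ⟨?_, by linarith [hxc.1, hc0], hxc.2⟩
          rw [hfge x (not_lt.2 hxc.1)]
          exact hx
    have hdisj : Disjoint S1 S2 := by
      rw [Set.disjoint_left]
      intro x h1 h2
      exact absurd (hS2sub h2).1 (not_le.2 (hS1sub x h1))
    have hBfin : volume B ≠ ⊤ :=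
      (lt_of_le_of_lt (measure_mono Set.inter_subset_right) measure_Ico_lt_top).ne
    have hAfin : volume A ≠ ⊤ :=
      (lt_of_le_of_lt (measure_mono hA01) measure_Icc_lt_top).ne
    have e1 : ∫ x in S1, gfun n x
        = (∫ y in B, gfun n y) - (2/((n:ℝ)+1)) * (volume B).toReal := by
      have estep : ∫ x in S1, gfun n x = ∫ y in B, gfun n (y - 1/(n:ℝ)) := by
        rw [← integral_indicator hS1, ← integral_indicator hB,
          ← integral_add_right_eq_self (Set.indicator B fun y => gfun n (y - 1/(n:ℝ)))
            (1/(n:ℝ))]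
        congr 1
        funext x
        by_cases hxB : x + 1/(n:ℝ) ∈ B
        · rw [Set.indicator_of_mem hxB, Set.indicator_of_mem (show x ∈ S1 from hxB)]
          simp
        · rw [Set.indicator_of_notMem hxB,
            Set.indicator_of_notMem (show x ∉ S1 from hxB)]
      rw [estep, setIntegral_congr_fun hB (fun y hy => gfun_shift n hn hy.2),
        integral_sub hgi.integrableOn
          (integrableOn_const hBfin), setIntegral_const, measureReal_def,
        smul_eq_mul, mul_comm]
    have e2 : ∫ x in S2, gfun n x = (2/((n:ℝ)+1)) * (volume A).toReal := by
      have hcomp : (fun x : ℝ => (n:ℝ)*(x-c)) =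
          (fun y : ℝ => y + -((n:ℝ)*c)) ∘ (fun x : ℝ => (n:ℝ)*x) := by
        funext x; simp [Function.comp]; ring
      have hvol : volume S2 = ENNReal.ofReal (1/(n:ℝ)) * volume A := by
        rw [hS2def, hcomp, Set.preimage_comp, Real.volume_preimage_mul_left hN0.ne',
          measure_preimage_add_right]
        congr 1
        rw [abs_of_pos (inv_pos.2 hN0), one_div]
      rw [setIntegral_congr_fun hS2 (fun x hx => gfun_high n hn (hcdef ▸ hS2sub hx)),
        setIntegral_const, measureReal_def, hvol, smul_eq_mul, ENNReal.toReal_mul,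
        ENNReal.toReal_ofReal (by positivity)]
      field_simp
    have e3 : ∫ x in A, gfun n x
        = (∫ y in B, gfun n y)
          + (2/((n:ℝ)+1)) * ((volume A).toReal - (volume B).toReal) := by
      have hA2 : A = B ∪ (A \ Set.Ico (1/(n:ℝ)) 1) := by
        rw [hBdef, Set.inter_union_diff]
      have hd : Disjoint B (A \ Set.Ico (1/(n:ℝ)) 1) :=
        Set.disjoint_sdiff_right.mono_left Set.inter_subset_right
      have e4 : ∫ x in A \ Set.Ico (1/(n:ℝ)) 1, gfun n x
          = (2/((n:ℝ)+1)) * (volume (A \ Set.Ico (1/(n:ℝ)) 1)).toReal := by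
        have h1 : ∀ᵐ x : ℝ, x ≠ 1 := by
          rw [ae_iff]
          have : {x : ℝ | ¬ x ≠ 1} = {1} := by ext x; simp
          rw [this]
          exact Real.volume_singleton
        rw [setIntegral_congr_ae (hA.diff measurableSet_Ico)
          (show ∀ᵐ x : ℝ, x ∈ A \ Set.Ico (1/(n:ℝ)) 1 → gfun n x = 2/((n:ℝ)+1) from ?_),
          setIntegral_const, measureReal_def, smul_eq_mul, mul_comm]
        filter_upwards [h1] with x hx hmem
        obtain ⟨hxA, hxn⟩ := hmem
        have h01 := hA01 hxA
        simp only [Set.mem_Icc] at h01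
        have hlt1 : x < 1 := lt_of_le_of_ne h01.2 hx
        have hltn : x < 1/(n:ℝ) := by
          by_contra h
          exact hxn ⟨not_lt.1 h, hlt1⟩
        exact gfun_low n hn ⟨h01.1, hltn⟩
      have hmeq : volume B + volume (A \ Set.Ico (1/(n:ℝ)) 1) = volume A :=
        measure_inter_add_diff A measurableSet_Ico
      have hDfin : volume (A \ Set.Ico (1/(n:ℝ)) 1) ≠ ⊤ :=
        (lt_of_le_of_lt (measure_mono Set.diff_subset) hAfin.lt_top).ne
      have hreal : (volume (A \ Set.Ico (1/(n:ℝ)) 1)).toReal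
          = (volume A).toReal - (volume B).toReal := by
        have := congrArg ENNReal.toReal hmeq
        rw [ENNReal.toReal_add hBfin hDfin] at this
        linarith
      conv_lhs => rw [hA2]
      rw [setIntegral_union hd (hA.diff measurableSet_Ico) hgi.integrableOn
        hgi.integrableOn, e4, hreal]
    rw [hg, hsplit, setIntegral_union hdisj hS2 hgi.integrableOn hgi.integrableOn,
      e1, e2, e3]
    ring
  · rw [hg]
    exact gfun_total n hn
end
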